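/- arXiv:1503.07095 — 3 statements merged into one kernel-verified Lean document; each statement's English description precedes it below -/
import Mathlib

section
/- Let (f_j)_{j∈ℕ} be an orthonormal sequence in ℓ₂(ℕ,ℂ) with each f_j ∈ s, and let (N_k)_{k∈ℕ} be a family of finite nonempty pairwise disjoint subsets of ℕ. Then the following are equivalent: (a) there exist a strictly increasing sequence (n_k)_{k∈ℕ} of natural numbers and a bijective ℂ-algebra homomorphism from the Köthe algebra λ^∞(max_{j∈N_k}|f_j|_q) := {ξ ∈ ℂ^ℕ : sup_k |ξ_k| · max_{j∈N_k}|f_j|_q < ∞ for all q ∈ ℕ₀} onto λ^∞(n_k^q) := {ξ ∈ ℂ^ℕ : sup_k |ξ_k| n_k^q < ∞ for all q ∈ ℕ₀} (both with pointwise operations); (b) there exists p ∈ ℕ₀ such that for every q ∈ ℕ₀ there exist r ∈ ℕ₀ and C > 0 with max_{j∈N_k}|f_j|_q ≤ C · (max_{j∈N_k}|f_j|_p)^r for all k ∈ ℕ. -/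
set_option maxHeartbeats 1000000

noncomputable section

/-- Membership in the space `s` of rapidly decreasing sequences (the paper's index
`j ∈ {1,2,...}` corresponds to `j+1` here). -/
def inS (ξ : ℕ → ℂ) : Prop :=
  ∀ q : ℕ, Summable fun j : ℕ => ‖ξ j‖ ^ 2 * ((j : ℝ) + 1) ^ (2 * q)

/-- The `q`-th norm `|ξ|_q` on `s`. -/
def sNorm (q : ℕ) (ξ : ℕ → ℂ) : ℝ :=
  Real.sqrt (∑' j : ℕ, ‖ξ j‖ ^ 2 * ((j : ℝ) + 1) ^ (2 * q))

lemma term_nonneg (ξ : ℕ → ℂ) (q j : ℕ) : 0 ≤ ‖ξ j‖ ^ 2 * ((j : ℝ) + 1) ^ (2 * q) := by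
  positivity

lemma sNorm_nonneg (q : ℕ) (ξ : ℕ → ℂ) : 0 ≤ sNorm q ξ := Real.sqrt_nonneg _

lemma sNorm_sq (q : ℕ) (ξ : ℕ → ℂ) :
    sNorm q ξ ^ 2 = ∑' j : ℕ, ‖ξ j‖ ^ 2 * ((j : ℝ) + 1) ^ (2 * q) := by
  apply Real.sq_sqrt
  exact tsum_nonneg fun j => term_nonneg ξ q j

-- total mass 1 from orthonormality diagonal
lemma sum_normSq_one (ξ : ℕ → ℂ) (hs : Summable fun m => ‖ξ m‖ ^ 2)
    (h : (∑' m, (starRingEnd ℂ) (ξ m) * ξ m) = 1) : (∑' m, ‖ξ m‖ ^ 2) = 1 := by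
  have h2 : ∀ m, (starRingEnd ℂ) (ξ m) * ξ m = ((‖ξ m‖ ^ 2 : ℝ) : ℂ) := fun m => by
    rw [mul_comm, Complex.mul_conj]
    norm_cast
    simp [Complex.normSq_eq_norm_sq]
  simp only [h2] at h
  have h3 : (∑' m, ((‖ξ m‖ ^ 2 : ℝ) : ℂ)) = ((∑' m, ‖ξ m‖ ^ 2 : ℝ) : ℂ) :=
    (Complex.ofRealCLM.map_tsum hs).symm
  rw [h3] at h
  exact_mod_cast h

lemma sNorm_zero_eq_one (ξ : ℕ → ℂ) (h : (∑' m, ‖ξ m‖ ^ 2) = 1) : sNorm 0 ξ = 1 := by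
  unfold sNorm
  simp only [Nat.mul_zero, pow_zero, mul_one]
  rw [h, Real.sqrt_one]

-- Cauchy-Schwarz interpolation
lemma sNorm_sq_le (ξ : ℕ → ℂ) (hξ : inS ξ) (h1 : (∑' m, ‖ξ m‖ ^ 2) = 1) (q : ℕ) :
    sNorm q ξ ^ 2 ≤ sNorm (2 * q) ξ := by
  rw [sNorm_sq]
  have hsum : Summable fun m => ‖ξ m‖ ^ 2 := by simpa using hξ 0
  apply Summable.tsum_le_of_sum_le (hξ q)
  intro s
  have cs := Finset.sum_mul_sq_le_sq_mul_sq s (fun j => ‖ξ j‖)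
    (fun j => ‖ξ j‖ * ((j : ℝ) + 1) ^ (2 * q))
  have e1 : ∀ j, ‖ξ j‖ * (‖ξ j‖ * ((j : ℝ) + 1) ^ (2 * q)) = ‖ξ j‖ ^ 2 * ((j : ℝ) + 1) ^ (2 * q) :=
    fun j => by ring
  have e2 : ∀ j : ℕ, (‖ξ j‖ * ((j : ℝ) + 1) ^ (2 * q)) ^ 2 = ‖ξ j‖ ^ 2 * ((j : ℝ) + 1) ^ (2 * (2 * q)) := by
    intro j
    rw [mul_pow, ← pow_mul]
    ring_nf
  simp only [e1, e2] at cs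
  have b1 : ∑ j ∈ s, ‖ξ j‖ ^ 2 ≤ 1 := by
    rw [← h1]
    exact Summable.sum_le_tsum s (fun j _ => by positivity) hsum
  have b2 : ∑ j ∈ s, ‖ξ j‖ ^ 2 * ((j : ℝ) + 1) ^ (2 * (2 * q)) ≤ sNorm (2 * q) ξ ^ 2 := by
    rw [sNorm_sq]
    exact Summable.sum_le_tsum s (fun j _ => term_nonneg ξ (2*q) j) (hξ (2 * q))
  have hb2nn : (0:ℝ) ≤ ∑ j ∈ s, ‖ξ j‖ ^ 2 * ((j : ℝ) + 1) ^ (2 * (2 * q)) :=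
    Finset.sum_nonneg fun j _ => term_nonneg ξ (2*q) j
  have hsn : 0 ≤ sNorm (2 * q) ξ := sNorm_nonneg _ _
  have key : (∑ j ∈ s, ‖ξ j‖ ^ 2 * ((j : ℝ) + 1) ^ (2 * q)) ^ 2 ≤ sNorm (2 * q) ξ ^ 2 := by
    calc (∑ j ∈ s, ‖ξ j‖ ^ 2 * ((j : ℝ) + 1) ^ (2 * q)) ^ 2
        ≤ (∑ j ∈ s, ‖ξ j‖ ^ 2) * ∑ j ∈ s, ‖ξ j‖ ^ 2 * ((j : ℝ) + 1) ^ (2 * (2 * q)) := cs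
      _ ≤ 1 * sNorm (2 * q) ξ ^ 2 := by
          apply mul_le_mul b1 b2 hb2nn zero_le_one
      _ = sNorm (2 * q) ξ ^ 2 := one_mul _
  nlinarith [Finset.sum_nonneg fun j (_ : j ∈ s) => term_nonneg ξ q j]

lemma sNorm_pow_two_le (ξ : ℕ → ℂ) (hξ : inS ξ) (h1 : (∑' m, ‖ξ m‖ ^ 2) = 1) :
    ∀ t q : ℕ, sNorm q ξ ^ (2 ^ t) ≤ sNorm (2 ^ t * q) ξ := by
  intro t
  induction t with
  | zero => intro q; simp
  | succ d ih =>
    intro q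
    have h2 : sNorm q ξ ^ (2 ^ (d + 1)) = (sNorm q ξ ^ (2 ^ d)) ^ 2 := by
      rw [← pow_mul]; ring_nf
    rw [h2]
    calc (sNorm q ξ ^ (2 ^ d)) ^ 2
        ≤ sNorm (2 ^ d * q) ξ ^ 2 := by
          apply pow_le_pow_left₀ (pow_nonneg (sNorm_nonneg q ξ) _) (ih q)
      _ ≤ sNorm (2 * (2 ^ d * q)) ξ := sNorm_sq_le ξ hξ h1 (2 ^ d * q)
      _ = sNorm (2 ^ (d + 1) * q) ξ := by ring_nf

open scoped ComplexOrder in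
lemma bessel (f : ℕ → ℕ → ℂ) (hfs : ∀ j, Summable fun m => ‖f j m‖ ^ 2)
    (hon : ∀ i j : ℕ,
      (∑' m : ℕ, (starRingEnd ℂ) (f i m) * f j m) = if i = j then 1 else 0)
    (J : Finset ℕ) (m : ℕ) : ∑ j ∈ J, ‖f j m‖ ^ 2 ≤ 1 := by
  classical
  let v : ℕ → lp (fun _ : ℕ => ℂ) 2 := fun j =>
    ⟨f j, memℓp_gen (by simpa using hfs j)⟩
  have hv : Orthonormal ℂ v := by
    rw [orthonormal_iff_ite]
    intro i j
    have : (inner ℂ (v i) (v j) : ℂ) = ∑' m : ℕ, (starRingEnd ℂ) (f i m) * f j m := by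
      rw [lp.inner_eq_tsum]
      congr 1
      funext m'
      exact mul_comm _ _
    rw [this, hon i j]
  have hb := hv.sum_inner_products_le (𝕜 := ℂ) (lp.single 2 m (1 : ℂ)) (s := J)
  have hnorm : ‖lp.single (E := fun _ : ℕ => ℂ) 2 m (1 : ℂ)‖ = 1 := by
    have := lp.norm_single (E := fun _ : ℕ => ℂ) (p := 2) (by norm_num)
      m (1 : ℂ)
    simpa using this
  have hin : ∀ j, (inner ℂ (v j) (lp.single (E := fun _ : ℕ => ℂ) 2 m (1 : ℂ)) : ℂ)
      = (starRingEnd ℂ) (f j m) := by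
    intro j
    have h1 : (inner ℂ (lp.single (E := fun _ : ℕ => ℂ) 2 m (1 : ℂ)) (v j) : ℂ)
        = f j m := by
      rw [lp.inner_single_left, RCLike.inner_apply]
      simp
      rfl
    calc (inner ℂ (v j) (lp.single (E := fun _ : ℕ => ℂ) 2 m (1 : ℂ)) : ℂ)
        = (starRingEnd ℂ) (inner ℂ (lp.single (E := fun _ : ℕ => ℂ) 2 m (1 : ℂ)) (v j)) := by
          rw [← inner_conj_symm]
      _ = (starRingEnd ℂ) (f j m) := by rw [h1]
  calc ∑ j ∈ J, ‖f j m‖ ^ 2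
      = ∑ j ∈ J, ‖(inner ℂ (v j) (lp.single (E := fun _ : ℕ => ℂ) 2 m (1 : ℂ)) : ℂ)‖ ^ 2 := by
        refine Finset.sum_congr rfl fun j _ => ?_
        rw [hin j, RingHomIsometric.norm_map]
    _ ≤ ‖lp.single (E := fun _ : ℕ => ℂ) 2 m (1 : ℂ)‖ ^ 2 := hb
    _ = 1 := by rw [hnorm]; norm_num

lemma counting (f : ℕ → ℕ → ℂ) (hfs : ∀ j, inS (f j))
    (hon : ∀ i j : ℕ,
      (∑' m : ℕ, (starRingEnd ℂ) (f i m) * f j m) = if i = j then 1 else 0)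
    (htot : ∀ j, (∑' m, ‖f j m‖ ^ 2) = 1)
    (J : Finset ℕ) (t : ℝ) (ht : 1 ≤ t)
    (hJ : ∀ j ∈ J, sNorm 1 (f j) ≤ t) : (J.card : ℝ) ≤ 6 * t := by
  classical
  set M : ℕ := ⌈2 * t⌉₊ with hM
  have hMt : 2 * t ≤ (M : ℝ) := Nat.le_ceil _
  have hMt' : (M : ℝ) < 2 * t + 1 := Nat.ceil_lt_add_one (by linarith)
  have hsumj : ∀ j, Summable fun m => ‖f j m‖ ^ 2 := fun j => by simpa using hfs j 0
  have hhead : ∀ j ∈ J, (1:ℝ)/2 ≤ ∑ m ∈ Finset.range M, ‖f j m‖ ^ 2 := by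
    intro j hj
    have heq : (∑ m ∈ Finset.range M, ‖f j m‖ ^ 2) + (∑' i, ‖f j (i + M)‖ ^ 2)
        = ∑' m, ‖f j m‖ ^ 2 := (hsumj j).sum_add_tsum_nat_add M
    have htail : (∑' i : ℕ, ‖f j (i + M)‖ ^ 2) ≤ 1/2 := by
      have hs1 : Summable fun i : ℕ => ‖f j (i + M)‖ ^ 2 :=
        (summable_nat_add_iff M).2 (hsumj j)
      have hs2 : Summable fun i : ℕ =>
          ‖f j (i + M)‖ ^ 2 * (((i + M : ℕ) : ℝ) + 1) ^ (2 * 1) :=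
        (summable_nat_add_iff M).2 (hfs j 1)
      have hMpos : (0:ℝ) < ((M:ℝ) + 1) ^ 2 := by positivity
      have step1 : (∑' i : ℕ, ‖f j (i + M)‖ ^ 2)
          ≤ ∑' i : ℕ, ‖f j (i + M)‖ ^ 2 * (((i + M : ℕ) : ℝ) + 1) ^ (2 * 1) / ((M:ℝ) + 1) ^ 2 := by
        apply Summable.tsum_le_tsum _ hs1 (hs2.div_const _)
        intro i
        rw [le_div_iff₀ hMpos]
        have hbase : ((M:ℝ) + 1) ^ 2 ≤ (((i + M : ℕ) : ℝ) + 1) ^ (2 * 1) := by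
          have : ((M:ℝ) + 1) ≤ (((i + M : ℕ) : ℝ) + 1) := by push_cast; linarith [Nat.cast_nonneg (α := ℝ) i]
          calc ((M:ℝ) + 1) ^ 2 ≤ (((i + M : ℕ) : ℝ) + 1) ^ 2 := by
                apply pow_le_pow_left₀ (by positivity) this
            _ = (((i + M : ℕ) : ℝ) + 1) ^ (2 * 1) := by norm_num
        calc ‖f j (i + M)‖ ^ 2 * ((M:ℝ) + 1) ^ 2
            ≤ ‖f j (i + M)‖ ^ 2 * (((i + M : ℕ) : ℝ) + 1) ^ (2 * 1) := by
              apply mul_le_mul_of_nonneg_left hbase (by positivity)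
          _ = ‖f j (i + M)‖ ^ 2 * (((i + M : ℕ) : ℝ) + 1) ^ (2 * 1) := rfl
      have step2 : (∑' i : ℕ, ‖f j (i + M)‖ ^ 2 * (((i + M : ℕ) : ℝ) + 1) ^ (2 * 1) / ((M:ℝ) + 1) ^ 2)
          = (∑' i : ℕ, ‖f j (i + M)‖ ^ 2 * (((i + M : ℕ) : ℝ) + 1) ^ (2 * 1)) / ((M:ℝ) + 1) ^ 2 :=
        tsum_div_const
      have step3 : (∑' i : ℕ, ‖f j (i + M)‖ ^ 2 * (((i + M : ℕ) : ℝ) + 1) ^ (2 * 1))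
          ≤ sNorm 1 (f j) ^ 2 := by
        rw [sNorm_sq]
        have heq2 : (∑ m ∈ Finset.range M, ‖f j m‖ ^ 2 * ((m : ℝ) + 1) ^ (2 * 1))
            + (∑' i, ‖f j (i + M)‖ ^ 2 * (((i + M : ℕ) : ℝ) + 1) ^ (2 * 1))
            = ∑' m, ‖f j m‖ ^ 2 * ((m : ℝ) + 1) ^ (2 * 1) := (hfs j 1).sum_add_tsum_nat_add M
        have hnn : (0:ℝ) ≤ ∑ m ∈ Finset.range M, ‖f j m‖ ^ 2 * ((m : ℝ) + 1) ^ (2 * 1) :=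
          Finset.sum_nonneg fun m _ => term_nonneg (f j) 1 m
        linarith
      have hsn : sNorm 1 (f j) ^ 2 ≤ t ^ 2 := by
        apply pow_le_pow_left₀ (sNorm_nonneg _ _) (hJ j hj)
      have hfrac : t ^ 2 / ((M:ℝ) + 1) ^ 2 ≤ 1/2 := by
        rw [div_le_iff₀ hMpos]
        nlinarith
      calc (∑' i : ℕ, ‖f j (i + M)‖ ^ 2)
          ≤ (∑' i : ℕ, ‖f j (i + M)‖ ^ 2 * (((i + M : ℕ) : ℝ) + 1) ^ (2 * 1)) / ((M:ℝ) + 1) ^ 2 := by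
            rw [← step2]; exact step1
        _ ≤ t ^ 2 / ((M:ℝ) + 1) ^ 2 := by
            gcongr
            exact le_trans step3 hsn
        _ ≤ 1/2 := hfrac
    rw [htot j] at heq
    linarith
  -- sum over J and swap
  have hswap : ∑ j ∈ J, ∑ m ∈ Finset.range M, ‖f j m‖ ^ 2
      = ∑ m ∈ Finset.range M, ∑ j ∈ J, ‖f j m‖ ^ 2 := Finset.sum_comm
  have hb : ∑ m ∈ Finset.range M, ∑ j ∈ J, ‖f j m‖ ^ 2 ≤ M := by
    calc ∑ m ∈ Finset.range M, ∑ j ∈ J, ‖f j m‖ ^ 2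
        ≤ ∑ _m ∈ Finset.range M, (1:ℝ) := by
          apply Finset.sum_le_sum
          intro m _
          exact bessel f (fun j => hsumj j) hon J m
      _ = M := by simp
  have hlow : (J.card : ℝ) * (1/2) ≤ ∑ j ∈ J, ∑ m ∈ Finset.range M, ‖f j m‖ ^ 2 := by
    calc (J.card : ℝ) * (1/2) = ∑ _j ∈ J, (1:ℝ)/2 := by
          rw [Finset.sum_const, nsmul_eq_mul]
      _ ≤ ∑ j ∈ J, ∑ m ∈ Finset.range M, ‖f j m‖ ^ 2 := Finset.sum_le_sum hhead
  have : (J.card : ℝ) * (1/2) ≤ M := by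
    rw [hswap] at hlow
    linarith
  linarith

lemma sNorm_mono (ξ : ℕ → ℂ) (hξ : inS ξ) {q q' : ℕ} (h : q ≤ q') :
    sNorm q ξ ≤ sNorm q' ξ := by
  apply Real.sqrt_le_sqrt
  apply Summable.tsum_le_tsum _ (hξ q) (hξ q')
  intro j
  apply mul_le_mul_of_nonneg_left _ (by positivity)
  have : (1:ℝ) ≤ (j:ℝ)+1 := by have := Nat.cast_nonneg (α := ℝ) j; linarith
  apply pow_le_pow_right₀ this
  omega


lemma kothe_incl (A B : ℕ → ℕ → ℝ) (hA1 : ∀ q k, 1 ≤ A q k) (hB1 : ∀ q k, 1 ≤ B q k)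
    (hAmono : ∀ q q' k, q ≤ q' → A q k ≤ A q' k)
    (hsub : ∀ ξ : ℕ → ℂ, (∀ q, ∃ C, ∀ k, ‖ξ k‖ * A q k ≤ C) →
            (∀ q, ∃ C, ∀ k, ‖ξ k‖ * B q k ≤ C)) :
    ∀ q, ∃ r : ℕ, ∃ C : ℝ, 0 < C ∧ ∀ k, B q k ≤ C * A r k := by
  intro q
  by_contra hcon
  push_neg at hcon
  -- hcon : ∀ r C, 0 < C → ∃ k, C * A r k < B q k
  have hcon' : ∀ r : ℕ, ∀ C : ℝ, ∃ k, (|C| + 1) * A r k < B q k := by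
    intro r C
    obtain ⟨k, hk⟩ := hcon r (|C| + 1) (by positivity)
    exact ⟨k, hk⟩
  -- build the sequence P : ℕ → ℕ × ℝ
  let P : ℕ → ℕ × ℝ := fun r => Nat.rec
    ((hcon' 0 0).choose, B q (hcon' 0 0).choose)
    (fun r ih => ((hcon' (r+1) (ih.2 + r + 1)).choose,
      ih.2 + B q (hcon' (r+1) (ih.2 + r + 1)).choose)) r
  set K : ℕ → ℕ := fun r => (P r).1 with hK
  set S : ℕ → ℝ := fun r => (P r).2 with hS
  have hP0 : (|(0:ℝ)| + 1) * A 0 (K 0) < B q (K 0) := (hcon' 0 0).choose_spec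
  have hS0 : S 0 = B q (K 0) := rfl
  have hPs : ∀ r : ℕ, (|S r + r + 1| + 1) * A (r+1) (K (r+1)) < B q (K (r+1)) :=
    fun r => (hcon' (r+1) (S r + r + 1)).choose_spec
  have hSs : ∀ r : ℕ, S (r+1) = S r + B q (K (r+1)) := fun r => rfl
  -- S is nonneg and dominates previous B-values
  have hSmono : ∀ r, S r ≤ S (r + 1) := by
    intro r
    rw [hSs r]
    have := hB1 q (K (r+1))
    linarith
  have hSle : ∀ {r r' : ℕ}, r ≤ r' → S r ≤ S r' := by
    intro r r' h
    exact monotone_nat_of_le_succ hSmono h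
  have hSnn : ∀ r, B q (K r) ≤ S r := by
    intro r
    cases r with
    | zero => rw [hS0]
    | succ m =>
      rw [hSs m]
      have h1 : 1 ≤ B q (K 0) := hB1 q (K 0)
      have : (0:ℝ) ≤ S m := by
        have := hSle (Nat.zero_le m); rw [hS0] at this; linarith
      linarith
  have hSge : ∀ {i r : ℕ}, i ≤ r → B q (K i) ≤ S r :=
    fun hi => le_trans (hSnn _) (hSle hi)
  -- key growth estimates
  have hgrow : ∀ r : ℕ, (r + 1 : ℝ) * A r (K r) < B q (K r) := by
    intro r
    cases r with
    | zero =>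
      have := hP0; simpa using this
    | succ m =>
      have h := hPs m
      have h0 : (0:ℝ) ≤ S m := by
        have h1 := hSge (le_refl m)
        have := hB1 q (K m); linarith
      have habs : |S m + (m:ℝ) + 1| = S m + m + 1 := abs_of_nonneg (by positivity)
      rw [habs] at h
      have hA := hA1 (m+1) (K (m+1))
      push_cast
      nlinarith [mul_le_mul_of_nonneg_right
        (show ((m:ℝ) + 1 + 1) ≤ S m + (m:ℝ) + 1 + 1 by linarith)
        (show (0:ℝ) ≤ A (m+1) (K (m+1)) by linarith)]
  have hgrow2 : ∀ r : ℕ, (r + 1 : ℝ) < B q (K r) := by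
    intro r
    have := hgrow r
    have hA := hA1 r (K r)
    nlinarith [hA1 r (K r)]
  -- strict domination over previous values gives injectivity
  have hKinj : Function.Injective K := by
    have hst : ∀ i r, i ≤ r → B q (K i) < B q (K (r+1)) := by
      intro i r hir
      have h := hPs r
      have habs : S r ≤ |S r + r + 1| := by
        have h0 : (0:ℝ) ≤ S r := by
          have := hB1 q (K r); have := hSnn r; linarith
        rw [abs_of_nonneg (by positivity)]; linarith
      have hAk := hA1 (r+1) (K (r+1))
      have : |S r + r + 1| + 1 ≤ (|S r + r + 1| + 1) * A (r+1) (K (r+1)) := by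
        nlinarith [abs_nonneg (S r + r + 1)]
      have := hSge hir
      linarith
    intro i j hij
    by_contra hne
    rcases Nat.lt_or_ge i j with h | h
    · obtain ⟨m, rfl⟩ : ∃ m, j = m + 1 := ⟨j - 1, by omega⟩
      have := hst i m (by omega)
      rw [hij] at this; exact lt_irrefl _ this
    · have hj : j < i := by omega
      obtain ⟨m, rfl⟩ : ∃ m, i = m + 1 := ⟨i - 1, by omega⟩
      have := hst j m (by omega)
      rw [hij] at this; exact lt_irrefl _ this
  -- the test sequence
  classical
  let ξ : ℕ → ℂ := fun m => if h : ∃ r, K r = m then (((A h.choose m)⁻¹ : ℝ) : ℂ) else 0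
  have hξK : ∀ r, ξ (K r) = ((A r (K r))⁻¹ : ℝ) := by
    intro r
    have h : ∃ r', K r' = K r := ⟨r, rfl⟩
    have := h.choose_spec
    have hr : h.choose = r := hKinj this
    simp only [ξ, dif_pos h]
    rw [hr]
  have hξnorm : ∀ r, ‖ξ (K r)‖ = (A r (K r))⁻¹ := by
    intro r
    rw [hξK r, Complex.norm_real, Real.norm_eq_abs, abs_of_nonneg]
    exact inv_nonneg.2 (le_trans zero_le_one (hA1 r (K r)))
  have hmem : ∀ q' : ℕ, ∃ C, ∀ k, ‖ξ k‖ * A q' k ≤ C := by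
    intro q'
    refine ⟨1 + ∑ r ∈ Finset.range q', A q' (K r), ?_⟩
    intro m
    have hsum_nn : (0:ℝ) ≤ ∑ r ∈ Finset.range q', A q' (K r) :=
      Finset.sum_nonneg fun r _ => le_trans zero_le_one (hA1 q' (K r))
    by_cases h : ∃ r, K r = m
    · obtain ⟨r, rfl⟩ := h
      rw [hξnorm r]
      have hApos : 0 < A r (K r) := lt_of_lt_of_le one_pos (hA1 r (K r))
      rcases Nat.lt_or_ge r q' with hr | hr
      · have h1 : (A r (K r))⁻¹ * A q' (K r) ≤ A q' (K r) := by
          have : (A r (K r))⁻¹ ≤ 1 := by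
            rw [inv_le_one_iff₀]; right; exact hA1 r (K r)
          nlinarith [le_trans zero_le_one (hA1 q' (K r))]
        have h2 : A q' (K r) ≤ ∑ r' ∈ Finset.range q', A q' (K r') := by
          apply Finset.single_le_sum (f := fun r' => A q' (K r')) _ (Finset.mem_range.2 hr)
          intro i _; linarith [hA1 q' (K i)]
        linarith
      · have h1 : A q' (K r) ≤ A r (K r) := hAmono q' r (K r) hr
        have : (A r (K r))⁻¹ * A q' (K r) ≤ 1 := by
          rw [inv_mul_le_iff₀ hApos, mul_one]
          exact h1
        linarith
    · simp only [ξ, dif_neg h]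
      simp only [norm_zero, zero_mul]
      linarith
  obtain ⟨C, hC⟩ := hsub ξ hmem q
  obtain ⟨r, hr⟩ := exists_nat_gt C
  have h1 := hC (K r)
  rw [hξnorm r] at h1
  have hApos : 0 < A r (K r) := lt_of_lt_of_le one_pos (hA1 r (K r))
  have h2 := hgrow r
  have h3 : (r + 1 : ℝ) < (A r (K r))⁻¹ * B q (K r) := by
    rw [lt_inv_mul_iff₀ hApos]
    linarith [hgrow r]
  have : (r:ℝ) < C := by linarith
  linarith

lemma rank_lemma (a : ℕ → ℝ) (ha1 : ∀ k, 1 ≤ a k) (E : ℝ) (hE : 0 ≤ E)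
    (hcard : ∀ s : Finset ℕ, ∀ t : ℝ, 1 ≤ t → (∀ k ∈ s, a k ≤ t) → (s.card : ℝ) ≤ E * t) :
    ∃ σ : ℕ → ℕ, Function.Bijective σ ∧ ∃ n : ℕ → ℕ, StrictMono n ∧ (∀ i, 0 < n i) ∧
      ∀ k, a k ≤ (n (σ k) : ℝ) ∧ (n (σ k) : ℝ) ≤ (E + 3) * a k := by
  classical
  set key : ℕ → ℝ ×ₗ ℕ := fun k => toLex (a k, k) with hkey
  have hkeyinj : Function.Injective key := by
    intro k l h
    have := congrArg (fun x => (ofLex x).2) h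
    simpa [hkey] using this
  have hlt : ∀ k l, key k < key l ↔ a k < a l ∨ (a k = a l ∧ k < l) := by
    intro k l
    exact Prod.Lex.lt_iff
  -- sublevel sets are finite
  have hfin : ∀ t : ℝ, {l | a l ≤ t}.Finite := by
    intro t
    by_contra hinf
    have hinf2 : {l | a l ≤ t}.Infinite := hinf
    obtain ⟨s, hsub, hcardeq⟩ :=
      hinf2.exists_subset_card_eq (⌈E * (max t 1)⌉₊ + 1)
    have h1 : (s.card : ℝ) ≤ E * max t 1 := by
      apply hcard s (max t 1) (le_max_right _ _)
      intro k hk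
      exact le_trans (hsub hk) (le_max_left _ _)
    rw [hcardeq] at h1
    have h2 : E * max t 1 ≤ ⌈E * max t 1⌉₊ := Nat.le_ceil _
    push_cast at h1
    linarith
  have hpredfin : ∀ k, {l | key l < key k}.Finite := by
    intro k
    apply (hfin (a k)).subset
    intro l hl
    rcases (hlt l k).1 hl with h | h
    · exact le_of_lt h
    · exact le_of_eq h.1
  let pred : ℕ → Finset ℕ := fun k => (hpredfin k).toFinset
  set σ : ℕ → ℕ := fun k => (pred k).card with hσ
  have hmem_pred : ∀ l k, l ∈ pred k ↔ key l < key k := by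
    intro l k; simp [pred, Set.Finite.mem_toFinset]
  have hsmono : ∀ k l, key k < key l → σ k < σ l := by
    intro k l h
    apply Finset.card_lt_card
    rw [Finset.ssubset_iff_of_subset]
    · exact ⟨k, (hmem_pred k l).2 h, fun hk => lt_irrefl _ ((hmem_pred k k).1 hk)⟩
    · intro x hx
      exact (hmem_pred x l).2 (lt_trans ((hmem_pred x k).1 hx) h)
  have hreflect : ∀ k l, σ k < σ l → key k < key l := by
    intro k l h
    rcases lt_trichotomy (key k) (key l) with h' | h' | h'
    · exact h'
    · exact absurd (hkeyinj h') (by rintro rfl; exact lt_irrefl _ h)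
    · exact absurd (hsmono l k h') (by omega)
  have hσinj : Function.Injective σ := by
    intro k l h
    by_contra hne
    rcases lt_trichotomy (key k) (key l) with h' | h' | h'
    · have := hsmono k l h'; omega
    · exact hne (hkeyinj h')
    · have := hsmono l k h'; omega
  -- step down
  have hstep : ∀ l, 0 < σ l → ∃ m, σ m = σ l - 1 := by
    intro l h
    have hne : (pred l).Nonempty := Finset.card_pos.1 h
    obtain ⟨m, hm, hmax⟩ := Finset.exists_max_image (pred l) key hne
    refine ⟨m, ?_⟩
    have : pred m = (pred l).erase m := by
      ext x
      rw [Finset.mem_erase, hmem_pred, hmem_pred]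
      constructor
      · intro hx
        exact ⟨fun hxm => by subst hxm; exact lt_irrefl _ hx,
          lt_trans hx ((hmem_pred m l).1 hm)⟩
      · rintro ⟨hxm, hxl⟩
        have hle := hmax x ((hmem_pred x l).2 hxl)
        rcases lt_or_eq_of_le hle with h' | h'
        · exact h'
        · exact absurd (hkeyinj h') hxm
    show (pred m).card = (pred l).card - 1
    rw [this, Finset.card_erase_of_mem hm]
  -- downward closure
  have hdown : ∀ nn l, σ l = nn → ∀ c ≤ nn, ∃ m, σ m = c := by
    intro nn
    induction nn with
    | zero => intro l hl c hc; exact ⟨l, by omega⟩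
    | succ d ih =>
      intro l hl c hc
      rcases Nat.eq_or_lt_of_le hc with h | h
      · exact ⟨l, by omega⟩
      · obtain ⟨m, hm⟩ := hstep l (by omega)
        exact ih m (by omega) c (by omega)
  -- unboundedness
  have hunb : ∀ c : ℕ, ∃ l, c ≤ σ l := by
    intro c
    by_contra hcon
    push_neg at hcon
    have himg : (Finset.range (c + 1)).image σ ⊆ Finset.range c := by
      intro x hx
      rw [Finset.mem_image] at hx
      obtain ⟨l, _, rfl⟩ := hx
      exact Finset.mem_range.2 (hcon l)
    have h1 : ((Finset.range (c + 1)).image σ).card = c + 1 := by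
      rw [Finset.card_image_of_injective _ hσinj, Finset.card_range]
    have h2 := Finset.card_le_card himg
    rw [h1, Finset.card_range] at h2
    omega
  have hσsurj : Function.Surjective σ := by
    intro c
    obtain ⟨l, hl⟩ := hunb c
    exact hdown (σ l) l rfl c hl
  -- now build n
  have hbij : Function.Bijective σ := ⟨hσinj, hσsurj⟩
  let e := Equiv.ofBijective σ hbij
  have heσ : ∀ k, e.symm (σ k) = k := fun k => e.symm_apply_apply k
  have hσe : ∀ i, σ (e.symm i) = i := fun i => e.apply_symm_apply i
  set n : ℕ → ℕ := fun i => ⌈a (e.symm i)⌉₊ + i + 1 with hn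
  have haτmono : ∀ i, a (e.symm i) ≤ a (e.symm (i + 1)) := by
    intro i
    have h : σ (e.symm i) < σ (e.symm (i+1)) := by rw [hσe, hσe]; omega
    have := hreflect _ _ h
    rcases (hlt _ _).1 this with h' | h'
    · exact le_of_lt h'
    · exact le_of_eq h'.1
  have hnmono : StrictMono n := by
    apply strictMono_nat_of_lt_succ
    intro i
    have := Nat.ceil_le_ceil (haτmono i)
    simp only [hn]
    omega
  refine ⟨σ, hbij, n, hnmono, fun i => Nat.succ_pos _, ?_⟩
  intro k
  have hτ : e.symm (σ k) = k := heσ k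
  have hσcard : (σ k : ℝ) ≤ E * a k := by
    apply hcard (pred k) (a k) (ha1 k)
    intro l hl
    rcases (hlt l k).1 ((hmem_pred l k).1 hl) with h | h
    · exact le_of_lt h
    · exact le_of_eq h.1
  constructor
  · have h1 : a k ≤ ⌈a k⌉₊ := Nat.le_ceil _
    have : (n (σ k) : ℝ) = ⌈a (e.symm (σ k))⌉₊ + σ k + 1 := by push_cast [hn]; ring
    rw [this, hτ]
    have : (0:ℝ) ≤ σ k := Nat.cast_nonneg _
    linarith
  · have h2 : (⌈a k⌉₊ : ℝ) < a k + 1 := Nat.ceil_lt_add_one (by linarith [ha1 k])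
    have : (n (σ k) : ℝ) = ⌈a (e.symm (σ k))⌉₊ + σ k + 1 := by push_cast [hn]; ring
    rw [this, hτ]
    have hak := ha1 k
    nlinarith


/-- Let `(f_j)` be an orthonormal sequence in `ℓ₂` with each `f_j ∈ s` and `(N_k)` finite
nonempty pairwise disjoint subsets of `ℕ`. TFAE: (a) there is a strictly increasing
sequence `(n_k)` of (positive) natural numbers and a bijective `ℂ`-algebra homomorphism
from `λ^∞(max_{j∈N_k}|f_j|_q)` onto `λ^∞(n_k^q)`; (b) there is `p` such that for every `q`
there are `r` and `C > 0` with `max_{j∈N_k}|f_j|_q ≤ C (max_{j∈N_k}|f_j|_p)^r` for all `k`. -/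
theorem stmt_13 (f : ℕ → ℕ → ℂ) (hfs : ∀ j, inS (f j))
    (hon : ∀ i j : ℕ,
      (∑' m : ℕ, (starRingEnd ℂ) (f i m) * f j m) = if i = j then 1 else 0)
    (N : ℕ → Finset ℕ) (hne : ∀ k, (N k).Nonempty)
    (hdisj : ∀ k l, k ≠ l → Disjoint (N k) (N l)) :
    (∃ n : ℕ → ℕ, StrictMono n ∧ (∀ k, 0 < n k) ∧
      ∃ Φ : (ℕ → ℂ) → (ℕ → ℂ),
        Set.BijOn Φ
          {ξ : ℕ → ℂ | ∀ q : ℕ, ∃ C : ℝ, ∀ k : ℕ,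
            ‖ξ k‖ * ((N k).sup' (hne k) fun j => sNorm q (f j)) ≤ C}
          {ξ : ℕ → ℂ | ∀ q : ℕ, ∃ C : ℝ, ∀ k : ℕ, ‖ξ k‖ * (n k : ℝ) ^ q ≤ C} ∧
        (∀ ξ ∈ {ξ : ℕ → ℂ | ∀ q : ℕ, ∃ C : ℝ, ∀ k : ℕ,
            ‖ξ k‖ * ((N k).sup' (hne k) fun j => sNorm q (f j)) ≤ C},
          ∀ η ∈ {ξ : ℕ → ℂ | ∀ q : ℕ, ∃ C : ℝ, ∀ k : ℕ,
            ‖ξ k‖ * ((N k).sup' (hne k) fun j => sNorm q (f j)) ≤ C},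
          Φ (ξ + η) = Φ ξ + Φ η ∧ Φ (ξ * η) = Φ ξ * Φ η) ∧
        (∀ (c : ℂ), ∀ ξ ∈ {ξ : ℕ → ℂ | ∀ q : ℕ, ∃ C : ℝ, ∀ k : ℕ,
            ‖ξ k‖ * ((N k).sup' (hne k) fun j => sNorm q (f j)) ≤ C},
          Φ (c • ξ) = c • Φ ξ)) ↔
    (∃ p : ℕ, ∀ q : ℕ, ∃ r : ℕ, ∃ C : ℝ, 0 < C ∧ ∀ k : ℕ,
      ((N k).sup' (hne k) fun j => sNorm q (f j)) ≤
        C * ((N k).sup' (hne k) fun j => sNorm p (f j)) ^ r) := by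
  classical
  set A : ℕ → ℕ → ℝ := fun q k => (N k).sup' (hne k) fun j => sNorm q (f j) with hA
  have htot : ∀ j, (∑' m, ‖f j m‖ ^ 2) = 1 := fun j =>
    sum_normSq_one _ (by simpa using hfs j 0) (by simpa using hon j j)
  have hs1 : ∀ q j, 1 ≤ sNorm q (f j) := fun q j => by
    rw [← sNorm_zero_eq_one (f j) (htot j)]
    exact sNorm_mono (f j) (hfs j) (Nat.zero_le q)
  have le_A : ∀ q k j, j ∈ N k → sNorm q (f j) ≤ A q k := by
    intro q k j hj
    simp only [hA]
    exact Finset.le_sup' (fun j => sNorm q (f j)) hj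
  have hA1 : ∀ q k, 1 ≤ A q k := by
    intro q k
    obtain ⟨j, hj⟩ := hne k
    exact le_trans (hs1 q j) (le_A q k j hj)
  have hAnn : ∀ q k, 0 ≤ A q k := fun q k => le_trans zero_le_one (hA1 q k)
  have hAmono : ∀ q q' k, q ≤ q' → A q k ≤ A q' k := by
    intro q q' k h
    apply Finset.sup'_le
    intro j hj
    exact le_trans (sNorm_mono (f j) (hfs j) h) (le_A q' k j hj)
  have hApow : ∀ p s : ℕ, ∃ q', ∀ k, A p k ^ s ≤ A q' k := by
    intro p s
    refine ⟨2 ^ s * p, fun k => ?_⟩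
    obtain ⟨j0, hj0, hj0eq⟩ := Finset.exists_mem_eq_sup' (hne k) fun j => sNorm p (f j)
    rw [hA]
    simp only
    rw [show ((N k).sup' (hne k) fun j => sNorm p (f j)) = sNorm p (f j0) from hj0eq]
    calc sNorm p (f j0) ^ s
        ≤ sNorm p (f j0) ^ (2 ^ s) := by
          apply pow_le_pow_right₀ (hs1 p j0) (le_of_lt (Nat.lt_two_pow_self))
      _ ≤ sNorm (2 ^ s * p) (f j0) := sNorm_pow_two_le (f j0) (hfs j0) (htot j0) s p
      _ ≤ (N k).sup' (hne k) fun j => sNorm (2 ^ s * p) (f j) := by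
            have := le_A (2 ^ s * p) k j0 hj0
            simpa [hA] using this
  constructor
  · -- (a) → (b)
    rintro ⟨n, hnmono, hnpos, Φ, hbij, hops, hsmul⟩
    set SA : Set (ℕ → ℂ) := {ξ : ℕ → ℂ | ∀ q : ℕ, ∃ C : ℝ, ∀ k : ℕ,
      ‖ξ k‖ * A q k ≤ C} with hSA
    set SB : Set (ℕ → ℂ) := {ξ : ℕ → ℂ | ∀ q : ℕ, ∃ C : ℝ, ∀ k : ℕ,
      ‖ξ k‖ * (n k : ℝ) ^ q ≤ C} with hSB
    have hn1 : ∀ i, (1:ℝ) ≤ (n i : ℝ) := fun i => by exact_mod_cast hnpos i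
    -- basic memberships
    have h0A : (0 : ℕ → ℂ) ∈ SA := fun q => ⟨0, fun k => by simp⟩
    have hΦ0 : Φ 0 = 0 := by
      have h := (hops 0 h0A 0 h0A).1
      rw [add_zero] at h
      exact (left_eq_add.1 h)
    -- indicator sequences
    set eA : ℕ → (ℕ → ℂ) := fun k m => if m = k then 1 else 0 with heAdef
    have heA : ∀ k, eA k ∈ SA := by
      intro k q
      refine ⟨A q k, fun m => ?_⟩
      by_cases h : m = k
      · simp [heAdef, h]
      · simp [heAdef, h, hAnn q k]
    have heB : ∀ m, eA m ∈ SB := by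
      intro m q
      refine ⟨(n m : ℝ) ^ q, fun i => ?_⟩
      have hnn : (0:ℝ) ≤ (n m : ℝ) ^ q := pow_nonneg (Nat.cast_nonneg _) q
      by_cases h : i = m
      · simp [heAdef, h]
      · simp [heAdef, h, hnn]
    have heAne : ∀ k, eA k ≠ 0 := by
      intro k h
      have := congrFun h k
      simp [heAdef] at this
    -- SA is closed under multiplication
    have hmulA : ∀ ξ ∈ SA, ∀ η ∈ SA, ξ * η ∈ SA := by
      intro ξ hξ η hη q
      obtain ⟨C₁, hC₁⟩ := hξ q
      obtain ⟨C₂, hC₂⟩ := hη 0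
      refine ⟨C₁ * C₂, fun k => ?_⟩
      have hη2 : ‖η k‖ ≤ C₂ := by
        have h1 := hC₂ k
        have h2 : ‖η k‖ * 1 ≤ ‖η k‖ * A 0 k :=
          mul_le_mul_of_nonneg_left (hA1 0 k) (norm_nonneg _)
        rw [mul_one] at h2
        linarith
      have hC₁nn : 0 ≤ C₁ := le_trans (mul_nonneg (norm_nonneg _) (hAnn q k)) (hC₁ k)
      calc ‖(ξ * η) k‖ * A q k = (‖ξ k‖ * A q k) * ‖η k‖ := by
            simp [Pi.mul_apply, norm_mul]; ring
        _ ≤ C₁ * C₂ :=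
            mul_le_mul (hC₁ k) hη2 (norm_nonneg _) hC₁nn
    -- idempotents are pointwise 0/1
    have hidem : ∀ ζ : ℕ → ℂ, ζ * ζ = ζ → ∀ m, ζ m = 0 ∨ ζ m = 1 := by
      intro ζ h m
      have := congrFun h m
      simp only [Pi.mul_apply] at this
      have h2 : ζ m * (ζ m - 1) = 0 := by linear_combination this
      rcases mul_eq_zero.1 h2 with h3 | h3
      · exact Or.inl h3
      · exact Or.inr (by linear_combination h3)
    have heAmul : ∀ k, eA k * eA k = eA k := by
      intro k; funext m
      by_cases h : m = k <;> simp [heAdef, h]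
    -- support analysis of Φ (eA k)
    have hsupp : ∀ k, ∃ m, Φ (eA k) = eA m := by
      intro k
      set g := Φ (eA k) with hg
      have hgB : g ∈ SB := hbij.mapsTo (heA k)
      have hgg : g * g = g := by
        have h := (hops (eA k) (heA k) (eA k) (heA k)).2
        rw [heAmul k] at h
        exact h.symm
      have h01 := hidem g hgg
      have hgne : g ≠ 0 := by
        intro h
        have : eA k = (0 : ℕ → ℂ) := hbij.injOn (heA k) h0A (by rw [← hg, h, hΦ0])
        exact heAne k this
      have hex : ∃ m, g m ≠ 0 := by
        by_contra hc
        push_neg at hc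
        exact hgne (funext fun m => hc m)
      obtain ⟨m₀, hm₀⟩ := hex
      have hm₀1 : g m₀ = 1 := (h01 m₀).resolve_left hm₀
      -- uniqueness of the support point
      have huniq : ∀ m', g m' ≠ 0 → m' = m₀ := by
        intro m' hm'
        by_contra hne'
        have hm'1 : g m' = 1 := (h01 m').resolve_left hm'
        -- eA m' ∈ SB, pull back
        obtain ⟨ζ, hζA, hζeq⟩ := hbij.surjOn (heB m')
        have hζζ : ζ * ζ = ζ := by
          apply hbij.injOn (hmulA ζ hζA ζ hζA) hζA
          rw [(hops ζ hζA ζ hζA).2, hζeq]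
          funext i
          by_cases h : i = m' <;> simp [heAdef, h]
        have hprod := (hops ζ hζA (eA k) (heA k)).2
        rcases hidem ζ hζζ k with h0 | h1
        · have hz : ζ * eA k = 0 := by
            funext m
            by_cases h : m = k
            · simp [heAdef, h, Pi.mul_apply]
              subst h
              exact h0
            · simp [heAdef, h, Pi.mul_apply]
          rw [hz, hΦ0, hζeq] at hprod
          have := congrFun hprod m'
          simp [heAdef] at this
          rw [← hg] at this
          rw [hm'1] at this
          simp at this
        · have hz : ζ * eA k = eA k := by
            funext m
            by_cases h : m = k
            · simp [heAdef, h, Pi.mul_apply]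
              subst h
              exact h1
            · simp [heAdef, h, Pi.mul_apply]
          rw [hz, hζeq] at hprod
          -- hprod : Φ (eA k) = eA m' * Φ (eA k)
          have := congrFun hprod m₀
          simp only [Pi.mul_apply, ← hg] at this
          rw [hm₀1] at this
          rw [show eA m' m₀ = 0 from by simp [heAdef, Ne.symm hne']] at this
          simp at this
      refine ⟨m₀, funext fun m => ?_⟩
      by_cases h : m = m₀
      · subst h; rw [hm₀1]; simp [heAdef]
      · have : g m = 0 := by
          by_contra hc
          exact h (huniq m hc)
        rw [this]
        simp [heAdef, h]
    choose σ hσ using hsupp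
    -- coordinates
    have hcoord : ∀ ξ ∈ SA, ∀ k, Φ ξ (σ k) = ξ k := by
      intro ξ hξ k
      have hprod := (hops ξ hξ (eA k) (heA k)).2
      have hscal : ξ * eA k = ξ k • eA k := by
        funext m
        by_cases h : m = k
        · subst h; simp [heAdef, Pi.mul_apply]
        · simp [heAdef, h, Pi.mul_apply]
      rw [hscal, hsmul (ξ k) (eA k) (heA k), hσ k] at hprod
      have := congrFun hprod (σ k)
      simp only [Pi.mul_apply, Pi.smul_apply, hσ k] at this
      simp [heAdef] at this
      exact this.symm
    -- σ is bijective
    have hσinj : Function.Injective σ := by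
      intro k l h
      have h1 : Φ (eA k) = Φ (eA l) := by rw [hσ k, hσ l, h]
      have := hbij.injOn (heA k) (heA l) h1
      by_contra hne'
      have := congrFun this k
      simp [heAdef, hne'] at this
    have hσsurj : Function.Surjective σ := by
      intro m
      obtain ⟨ζ, hζA, hζeq⟩ := hbij.surjOn (heB m)
      have hζζ : ζ * ζ = ζ := by
        apply hbij.injOn (hmulA ζ hζA ζ hζA) hζA
        rw [(hops ζ hζA ζ hζA).2, hζeq]
        funext i
        by_cases h : i = m <;> simp [heAdef, h]
      have hζne : ζ ≠ 0 := by
        intro h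
        rw [h, hΦ0] at hζeq
        have := congrFun hζeq m
        simp [heAdef] at this
      have hex : ∃ k, ζ k ≠ 0 := by
        by_contra hc
        push_neg at hc
        exact hζne (funext fun k => hc k)
      obtain ⟨k, hk⟩ := hex
      have hk1 : ζ k = 1 := (hidem ζ hζζ k).resolve_left hk
      have h1 : Φ ζ (σ k) = ζ k := hcoord ζ hζA k
      rw [hζeq, hk1] at h1
      refine ⟨k, ?_⟩
      by_contra hne'
      simp [heAdef, hne'] at h1
    set e := Equiv.ofBijective σ ⟨hσinj, hσsurj⟩ with he
    -- the two Köthe spaces coincide after reindexing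
    set B' : ℕ → ℕ → ℝ := fun q k => (n (σ k) : ℝ) ^ q with hB'
    have hB'1 : ∀ q k, 1 ≤ B' q k := fun q k => one_le_pow₀ (hn1 (σ k))
    have hB'mono : ∀ q q' k, q ≤ q' → B' q k ≤ B' q' k := fun q q' k h =>
      pow_le_pow_right₀ (hn1 (σ k)) h
    have hsub1 : ∀ ξ : ℕ → ℂ, (∀ q, ∃ C, ∀ k, ‖ξ k‖ * A q k ≤ C) →
        (∀ q, ∃ C, ∀ k, ‖ξ k‖ * B' q k ≤ C) := by
      intro ξ hξ q
      obtain ⟨C, hC⟩ := hbij.mapsTo (hξ : ξ ∈ SA) q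
      refine ⟨C, fun k => ?_⟩
      have := hC (σ k)
      rw [hcoord ξ hξ k] at this
      exact this
    have hsub2 : ∀ ξ : ℕ → ℂ, (∀ q, ∃ C, ∀ k, ‖ξ k‖ * B' q k ≤ C) →
        (∀ q, ∃ C, ∀ k, ‖ξ k‖ * A q k ≤ C) := by
      intro ξ hξ
      set η : ℕ → ℂ := fun m => ξ (e.symm m) with hη
      have hηB : η ∈ SB := by
        intro q
        obtain ⟨C, hC⟩ := hξ q
        refine ⟨C, fun m => ?_⟩
        have hσe : σ (e.symm m) = m := e.apply_symm_apply m
        have := hC (e.symm m)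
        simp only [hB'] at this
        rw [hσe] at this
        exact this
      obtain ⟨ζ, hζA, hζeq⟩ := hbij.surjOn hηB
      have hζξ : ζ = ξ := by
        funext k
        have h1 : Φ ζ (σ k) = ζ k := hcoord ζ hζA k
        rw [hζeq] at h1
        have hek : e.symm (σ k) = k := e.symm_apply_apply k
        simp only [hη] at h1
        rw [hek] at h1
        exact h1.symm
      rw [← hζξ]
      exact hζA
    have h1 := kothe_incl A B' hA1 hB'1 hAmono hsub1 1
    obtain ⟨p, C₂, hC₂, hp⟩ := h1
    have h2 := kothe_incl B' A hB'1 hA1 hB'mono hsub2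
    refine ⟨p, fun q => ?_⟩
    obtain ⟨r, C₁, hC₁, hq⟩ := h2 q
    refine ⟨r, C₁ * C₂ ^ r, by positivity, fun k => ?_⟩
    have hnk : (n (σ k) : ℝ) ≤ C₂ * A p k := by
      have := hp k
      rw [hB'] at this
      simpa using this
    calc A q k ≤ C₁ * B' r k := hq k
      _ = C₁ * (n (σ k) : ℝ) ^ r := by rw [hB']
      _ ≤ C₁ * (C₂ * A p k) ^ r := by
          apply mul_le_mul_of_nonneg_left _ hC₁.le
          exact pow_le_pow_left₀ (Nat.cast_nonneg _) hnk r
      _ = C₁ * C₂ ^ r * A p k ^ r := by rw [mul_pow]; ring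
  · -- (b) → (a)
    rintro ⟨p₀, hb⟩
    set p : ℕ := max p₀ 1 with hp
    have hb' : ∀ q, ∃ r C, 0 < C ∧ ∀ k, A q k ≤ C * A p k ^ r := by
      intro q
      obtain ⟨r, C, hC, h⟩ := hb q
      refine ⟨r, C, hC, fun k => le_trans (h k) ?_⟩
      apply mul_le_mul_of_nonneg_left _ hC.le
      exact pow_le_pow_left₀ (hAnn p₀ k) (hAmono p₀ p k (le_max_left _ _)) r
    -- counting bound for the weight sequence a := A p
    have hcard6 : ∀ s : Finset ℕ, ∀ t : ℝ, 1 ≤ t → (∀ k ∈ s, A p k ≤ t) →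
        (s.card : ℝ) ≤ 6 * t := by
      intro s t ht hs
      set jf : ℕ → ℕ := fun k => (hne k).choose with hjf
      have hjfmem : ∀ k, jf k ∈ N k := fun k => (hne k).choose_spec
      have hinj : Set.InjOn jf s := by
        intro k _ l _ h
        by_contra hkl
        exact (Finset.disjoint_left.1 (hdisj k l hkl)) (hjfmem k) (h ▸ hjfmem l)
      have hcard : s.card = (s.image jf).card := (Finset.card_image_of_injOn hinj).symm
      rw [hcard]
      apply counting f hfs hon htot (s.image jf) t ht
      intro j hj
      rw [Finset.mem_image] at hj
      obtain ⟨k, hk, rfl⟩ := hj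
      calc sNorm 1 (f (jf k)) ≤ A 1 k := le_A 1 k (jf k) (hjfmem k)
        _ ≤ A p k := hAmono 1 p k (le_max_right _ _)
        _ ≤ t := hs k hk
    obtain ⟨σ, hbij, n, hnmono, hnpos, hbounds⟩ :=
      rank_lemma (fun k => A p k) (hA1 p) 6 (by norm_num) hcard6
    refine ⟨n, hnmono, hnpos, ?_⟩
    set e := Equiv.ofBijective σ hbij with he
    refine ⟨fun ξ i => ξ (e.symm i), ⟨?_, ?_, ?_⟩, ?_, ?_⟩
    · -- MapsTo
      intro ξ hξ
      intro q
      obtain ⟨q', hq'⟩ := hApow p q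
      obtain ⟨C, hC⟩ := hξ q'
      refine ⟨9 ^ q * C, fun i => ?_⟩
      have hσk : σ (e.symm i) = i := e.apply_symm_apply i
      set k := e.symm i with hk
      have h1 : (n i : ℝ) ≤ 9 * A p k := by
        rw [← hσk]
        have := (hbounds k).2
        norm_num at this ⊢
        linarith
      calc ‖ξ k‖ * (n i : ℝ) ^ q
          ≤ ‖ξ k‖ * (9 * A p k) ^ q := by
            apply mul_le_mul_of_nonneg_left _ (norm_nonneg _)
            exact pow_le_pow_left₀ (Nat.cast_nonneg _) h1 q
        _ = 9 ^ q * (‖ξ k‖ * A p k ^ q) := by rw [mul_pow]; ring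
        _ ≤ 9 ^ q * (‖ξ k‖ * A q' k) := by
            apply mul_le_mul_of_nonneg_left _ (by positivity)
            exact mul_le_mul_of_nonneg_left (hq' k) (norm_nonneg _)
        _ ≤ 9 ^ q * C := by
            apply mul_le_mul_of_nonneg_left (hC k) (by positivity)
    · -- InjOn
      intro ξ _ η _ h
      funext k
      have hek : e.symm (σ k) = k := e.symm_apply_apply k
      have := congrFun h (σ k)
      simp only at this
      rw [hek] at this
      exact this
    · -- SurjOn
      intro η hη
      refine ⟨fun k => η (σ k), ?_, ?_⟩
      · intro q
        obtain ⟨r, C₁, hC₁, hbk⟩ := hb' q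
        obtain ⟨C₂, hC₂⟩ := hη r
        refine ⟨C₁ * C₂, fun k => ?_⟩
        have h1 : A p k ^ r ≤ (n (σ k) : ℝ) ^ r :=
          pow_le_pow_left₀ (hAnn p k) (hbounds k).1 r
        calc ‖η (σ k)‖ * A q k
            ≤ ‖η (σ k)‖ * (C₁ * A p k ^ r) :=
              mul_le_mul_of_nonneg_left (hbk k) (norm_nonneg _)
          _ = C₁ * (‖η (σ k)‖ * A p k ^ r) := by ring
          _ ≤ C₁ * (‖η (σ k)‖ * (n (σ k) : ℝ) ^ r) := by
              apply mul_le_mul_of_nonneg_left _ hC₁.le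
              exact mul_le_mul_of_nonneg_left h1 (norm_nonneg _)
          _ ≤ C₁ * C₂ := mul_le_mul_of_nonneg_left (hC₂ (σ k)) hC₁.le
      · funext i
        have hσe : σ (e.symm i) = i := e.apply_symm_apply i
        show η (σ (e.symm i)) = η i
        rw [hσe]
    · -- additivity and multiplicativity
      intro ξ _ η _
      exact ⟨rfl, rfl⟩
    · -- smul
      intro c ξ _
      rfl
end
end

section
/- There exists a sequence (f_k)_{k∈ℕ} of elements of s which is orthonormal in ℓ₂(ℕ,ℂ) and satisfies: for all p, r ∈ ℕ, lim_{k→∞} |f_k|_{∞,p+1} / (|f_k|_{∞,p})^r = ∞, where |ξ|_{∞,q} := sup_{j∈ℕ} |ξ_j| j^q. In particular, there is no p ∈ ℕ₀ such that for every q ∈ ℕ₀ there exist r ∈ ℕ₀ and C > 0 with |f_k|_{∞,q} ≤ C·(|f_k|_{∞,p})^r for all k ∈ ℕ. -/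
noncomputable section

/-- The sup-norm `|ξ|_{∞,q} = sup_j |ξ_j| (j+1)^q`. -/
def supNorm (q : ℕ) (ξ : ℕ → ℂ) : ℝ :=
  ⨆ j : ℕ, ‖ξ j‖ * ((j : ℝ) + 1) ^ q

namespace Stmt16Aux

/-- the k-th prime -/
def b (k : ℕ) : ℕ := Nat.nth Nat.Prime k

lemma b_prime (k : ℕ) : Nat.Prime (b k) := Nat.prime_nth_prime k
lemma two_le_b (k : ℕ) : 2 ≤ b k := (b_prime k).two_le
lemma b_inj : Function.Injective b := Nat.nth_injective Nat.infinite_setOf_prime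
lemma one_lt_bR (k : ℕ) : (1:ℝ) < (b k : ℝ) := by exact_mod_cast (two_le_b k).trans_lt' one_lt_two
lemma bR_pos (k : ℕ) : (0:ℝ) < (b k : ℝ) := lt_trans one_pos (one_lt_bR k)
lemma two_le_bR (k : ℕ) : (2:ℝ) ≤ (b k : ℝ) := by exact_mod_cast two_le_b k

/-- `gexp k q = 1 + c + ... + c^(q-1)` with `c = k+2`. -/
def gexp (k q : ℕ) : ℕ := ∑ t ∈ Finset.range q, (k+2)^t

lemma gexp_succ (k q : ℕ) : gexp k (q+1) = gexp k q + (k+2)^q := Finset.sum_range_succ _ q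

lemma gexp_le (k q : ℕ) : gexp k q ≤ q * (k+2)^q := by
  calc gexp k q ≤ ∑ _t ∈ Finset.range q, (k+2)^q := by
        refine Finset.sum_le_sum fun t ht => Nat.pow_le_pow_right (by omega) ?_
        exact le_of_lt (Finset.mem_range.mp ht)
    _ = q * (k+2)^q := by simp [Finset.sum_const, Finset.card_range, Nat.smul_one_eq_cast]

lemma gexp_le' (k q : ℕ) : gexp k (q+1) ≤ (q+1) * (k+2)^q := by
  calc gexp k (q+1) ≤ ∑ _t ∈ Finset.range (q+1), (k+2)^q := by
        refine Finset.sum_le_sum fun t ht => Nat.pow_le_pow_right (by omega) ?_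
        exact Nat.lt_succ_iff.mp (Finset.mem_range.mp ht)
    _ = (q+1) * (k+2)^q := by simp [Finset.sum_const, Finset.card_range, Nat.smul_one_eq_cast]

/-- amplitude exponents -/
def A (k i : ℕ) : ℕ := i * (k+2)^i - gexp k i

lemma A_add_gexp (k i : ℕ) : A k i + gexp k i = i * (k+2)^i := by
  have h : gexp k i ≤ i * (k+2)^i := gexp_le k i
  simp [A, Nat.sub_add_cancel h]

lemma gexp_add_le (k i : ℕ) : i + gexp k i ≤ i * (k+2)^i := by
  induction i with
  | zero => simp [gexp]
  | succ n ih =>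
      have h1 : gexp k (n+1) = gexp k n + (k+2)^n := gexp_succ k n
      have h2 : 1 ≤ (k+2)^n := Nat.one_le_pow _ _ (by omega)
      have h3 : (n+1) * (k+2)^(n+1) = (n+1) * (k+2) * (k+2)^n := by ring
      have h4 : (n+1) * (k+2) ≥ 2*n + 2 := by nlinarith
      nlinarith [Nat.one_le_pow n (k+2) (show 0 < k+2 by omega)]

lemma le_A (k i : ℕ) : i ≤ A k i := by
  have h1 := A_add_gexp k i
  have h2 := gexp_add_le k i
  omega

/-- the key convexity inequality -/
lemma key (k i q : ℕ) : q * (k+2)^i + gexp k i ≤ gexp k q + i * (k+2)^i := by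
  rcases le_total i q with h | h
  · -- gexp q = gexp i + ∑_{Ico i q}
    have hsplit : gexp k i + ∑ t ∈ Finset.Ico i q, (k+2)^t = gexp k q := by
      have := Finset.sum_Ico_consecutive (fun t => (k+2)^t) (Nat.zero_le i) h
      simp only [gexp, Finset.range_eq_Ico]
      exact this
    have hlb : (q - i) * (k+2)^i ≤ ∑ t ∈ Finset.Ico i q, (k+2)^t := by
      have := Finset.card_nsmul_le_sum (Finset.Ico i q) (fun t => (k+2)^t) ((k+2)^i)
        (fun t ht => Nat.pow_le_pow_right (by omega) (Finset.mem_Ico.mp ht).1)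
      simpa [Nat.card_Ico, smul_eq_mul] using this
    have hq : q * (k+2)^i = (q - i) * (k+2)^i + i * (k+2)^i := by
      rw [← Nat.add_mul]; congr 1; omega
    omega
  · have hsplit : gexp k q + ∑ t ∈ Finset.Ico q i, (k+2)^t = gexp k i := by
      have := Finset.sum_Ico_consecutive (fun t => (k+2)^t) (Nat.zero_le q) h
      simp only [gexp, Finset.range_eq_Ico]
      exact this
    have hub : ∑ t ∈ Finset.Ico q i, (k+2)^t ≤ (i - q) * (k+2)^i := by
      have := Finset.sum_le_card_nsmul (Finset.Ico q i) (fun t => (k+2)^t) ((k+2)^i)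
        (fun t ht => Nat.pow_le_pow_right (by omega) (le_of_lt (Finset.mem_Ico.mp ht).2))
      simpa [Nat.card_Ico, smul_eq_mul] using this
    have hq : i * (k+2)^i = (i - q) * (k+2)^i + q * (k+2)^i := by
      rw [← Nat.add_mul]; congr 1; omega
    omega


/-- spike indices -/
def idx (k i : ℕ) : ℕ := b k ^ ((k+2)^i) - 1

lemma idx_add_one (k i : ℕ) : idx k i + 1 = b k ^ ((k+2)^i) := by
  have : 1 ≤ b k ^ ((k+2)^i) := Nat.one_le_pow _ _ (by have := two_le_b k; omega)
  simp [idx, Nat.sub_add_cancel this]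

lemma idx_inj (k : ℕ) : Function.Injective (idx k) := by
  intro i j h
  have h1 : b k ^ ((k+2)^i) = b k ^ ((k+2)^j) := by
    have hi := idx_add_one k i; have hj := idx_add_one k j; omega
  have h2 : (k+2)^i = (k+2)^j := Nat.pow_right_injective (two_le_b k) h1
  exact Nat.pow_right_injective (by omega) h2

/-- tail mass -/
def T (k : ℕ) : ℝ := ∑ i ∈ Finset.range (k+1), (((b k : ℝ) ^ A k (i+1))⁻¹)^2

lemma T_nonneg (k : ℕ) : 0 ≤ T k :=
  Finset.sum_nonneg fun i _ => sq_nonneg _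

lemma geo_aux : ∀ n : ℕ, 3 * (∑ i ∈ Finset.range n, ((1:ℝ)/4)^(i+1)) = 1 - (1/4:ℝ)^n := by
  intro n
  induction n with
  | zero => simp
  | succ m ih =>
      rw [Finset.sum_range_succ, mul_add, ih]
      ring

lemma T_le_third (k : ℕ) : T k ≤ 1/3 := by
  have hterm : ∀ i ∈ Finset.range (k+1), (((b k : ℝ) ^ A k (i+1))⁻¹)^2 ≤ ((1:ℝ)/4)^(i+1) := by
    intro i _
    have hA : i + 1 ≤ A k (i+1) := le_A k (i+1)
    have h1 : (2:ℝ)^(i+1) ≤ (b k : ℝ) ^ A k (i+1) := by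
      calc (2:ℝ)^(i+1) ≤ (2:ℝ)^(A k (i+1)) := by
            exact pow_le_pow_right₀ (by norm_num) hA
        _ ≤ (b k : ℝ)^(A k (i+1)) := by
            exact pow_le_pow_left₀ (by norm_num) (two_le_bR k) _
    have h2 : (0:ℝ) < (2:ℝ)^(i+1) := by positivity
    have h3 : ((b k : ℝ) ^ A k (i+1))⁻¹ ≤ ((2:ℝ)^(i+1))⁻¹ := by
      exact inv_anti₀ h2 h1
    have h4 : (0:ℝ) ≤ ((b k : ℝ) ^ A k (i+1))⁻¹ := by positivity
    calc (((b k : ℝ) ^ A k (i+1))⁻¹)^2 ≤ (((2:ℝ)^(i+1))⁻¹)^2 := by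
          exact pow_le_pow_left₀ h4 h3 2
      _ = ((1:ℝ)/4)^(i+1) := by
          rw [← inv_pow, ← pow_mul, mul_comm (i+1) 2, pow_mul]
          norm_num
  calc T k ≤ ∑ i ∈ Finset.range (k+1), ((1:ℝ)/4)^(i+1) := Finset.sum_le_sum hterm
    _ ≤ 1/3 := by
        have := geo_aux (k+1)
        have h5 : (0:ℝ) ≤ (1/4:ℝ)^(k+1) := by positivity
        linarith

lemma T_lt_one (k : ℕ) : T k < 1 := lt_of_le_of_lt (T_le_third k) (by norm_num)

/-- amplitudes -/
def amp (k i : ℕ) : ℝ := if i = 0 then Real.sqrt (1 - T k) else ((b k : ℝ) ^ A k i)⁻¹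

lemma amp_nonneg (k i : ℕ) : 0 ≤ amp k i := by
  unfold amp; split
  · exact Real.sqrt_nonneg _
  · positivity

lemma amp_le_one (k i : ℕ) : amp k i ≤ 1 := by
  unfold amp; split
  · exact Real.sqrt_le_one.mpr (by linarith [T_nonneg k])
  · exact inv_le_one_of_one_le₀ (one_le_pow₀ (le_of_lt (one_lt_bR k)))

/-- the sequence -/
def f (k j : ℕ) : ℂ :=
  ∑ i ∈ Finset.range (k+2), if j + 1 = b k ^ ((k+2)^i) then (amp k i : ℂ) else 0

lemma f_apply_idx (k i : ℕ) (hi : i < k+2) : f k (idx k i) = (amp k i : ℂ) := by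
  unfold f
  rw [Finset.sum_eq_single_of_mem i (Finset.mem_range.mpr hi)]
  · rw [if_pos (idx_add_one k i)]
  · intro j _ hji
    rw [if_neg]
    intro hcontra
    rw [idx_add_one k i] at hcontra
    have h2 : (k+2)^i = (k+2)^j := Nat.pow_right_injective (two_le_b k) hcontra
    exact hji (Nat.pow_right_injective (by omega) h2).symm

lemma f_eq_zero (k j : ℕ) (h : ∀ i < k+2, j + 1 ≠ b k ^ ((k+2)^i)) : f k j = 0 := by
  unfold f
  refine Finset.sum_eq_zero fun i hi => ?_
  rw [if_neg (h i (Finset.mem_range.mp hi))]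

lemma f_support (k j : ℕ) (h : f k j ≠ 0) : ∃ i < k+2, j = idx k i := by
  by_contra hc
  push_neg at hc
  refine h (f_eq_zero k j fun i hi hji => ?_)
  refine hc i hi ?_
  have := idx_add_one k i
  omega


lemma norm_f_idx (k i : ℕ) (hi : i < k+2) : ‖f k (idx k i)‖ = amp k i := by
  rw [f_apply_idx k i hi, Complex.norm_real, Real.norm_eq_abs, abs_of_nonneg (amp_nonneg k i)]

lemma cast_idx (k i : ℕ) : ((idx k i : ℕ) : ℝ) + 1 = (b k : ℝ) ^ ((k+2)^i) := by
  have := idx_add_one k i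
  exact_mod_cast congrArg (fun n : ℕ => (n : ℝ)) this

lemma term_le (k q : ℕ) : ∀ j : ℕ, ‖f k j‖ * ((j:ℝ)+1)^q ≤ (b k:ℝ)^(gexp k q + q) := by
  intro j
  by_cases hf : f k j = 0
  · rw [hf]
    simp only [norm_zero, zero_mul]
    positivity
  · obtain ⟨i, hi, rfl⟩ := f_support k j hf
    rw [norm_f_idx k i hi, cast_idx k i, ← pow_mul]
    rcases Nat.eq_zero_or_pos i with h0 | hpos
    · subst h0
      simp only [pow_zero, one_mul]
      calc amp k 0 * (b k:ℝ)^q ≤ 1 * (b k:ℝ)^q := by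
            exact mul_le_mul_of_nonneg_right (amp_le_one k 0) (by positivity)
        _ = (b k:ℝ)^q := one_mul _
        _ ≤ (b k:ℝ)^(gexp k q + q) := by
            exact pow_le_pow_right₀ (le_of_lt (one_lt_bR k)) (by omega)
    · have hamp : amp k i = ((b k : ℝ) ^ A k i)⁻¹ := by
        unfold amp; rw [if_neg (by omega)]
      rw [hamp, inv_mul_le_iff₀ (pow_pos (bR_pos k) _)]
      rw [← pow_add]
      refine pow_le_pow_right₀ (le_of_lt (one_lt_bR k)) ?_
      have hkey := key k i q
      have hA := A_add_gexp k i
      have : (k+2)^i * q = q * (k+2)^i := mul_comm _ _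
      -- q * c^i + gexp i ≤ gexp q + i * c^i = gexp q + A i + gexp i
      -- hence c^i * q ≤ gexp q + A i ≤ A k i + (gexp q + q)
      omega

lemma bdd (k q : ℕ) : BddAbove (Set.range fun j : ℕ => ‖f k j‖ * ((j:ℝ)+1)^q) := by
  refine ⟨(b k:ℝ)^(gexp k q + q), ?_⟩
  rintro x ⟨j, rfl⟩
  exact term_le k q j

lemma supNorm_nonneg (k q : ℕ) : 0 ≤ supNorm q (f k) :=
  Real.iSup_nonneg fun j => by positivity

lemma supNorm_le (k q : ℕ) : supNorm q (f k) ≤ (b k:ℝ)^(gexp k q + q) :=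
  ciSup_le (term_le k q)

lemma supNorm_ge (k q : ℕ) (h1 : 1 ≤ q) (h2 : q ≤ k+1) :
    (b k:ℝ)^(gexp k q) ≤ supNorm q (f k) := by
  refine le_ciSup_of_le (bdd k q) (idx k q) ?_
  have hq2 : q < k + 2 := by omega
  rw [norm_f_idx k q hq2, cast_idx k q, ← pow_mul]
  have hamp : amp k q = ((b k : ℝ) ^ A k q)⁻¹ := by
    unfold amp; rw [if_neg (by omega)]
  rw [hamp]
  have hA : (k+2)^q * q = A k q + gexp k q := by
    rw [mul_comm]; exact (A_add_gexp k q).symm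
  rw [hA, pow_add, inv_mul_cancel_left₀ (pow_ne_zero _ (ne_of_gt (bR_pos k)))]


lemma f_inS (k : ℕ) : inS (f k) := by
  intro q
  apply summable_of_finite_support
  apply Set.Finite.subset (((Finset.range (k+2)).image (idx k)).finite_toSet)
  intro j hj
  have hne : f k j ≠ 0 := by
    intro h0
    apply hj
    simp [Function.mem_support, h0]
  obtain ⟨i, hi, rfl⟩ := f_support k j hne
  exact Finset.mem_coe.mpr (Finset.mem_image.mpr ⟨i, Finset.mem_range.mpr hi, rfl⟩)

lemma ortho (k l : ℕ) (hkl : k ≠ l) (m : ℕ) : (starRingEnd ℂ) (f k m) * f l m = 0 := by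
  by_cases h1 : f k m = 0
  · simp [h1]
  by_cases h2 : f l m = 0
  · simp [h2]
  exfalso
  obtain ⟨i, hi, rfl⟩ := f_support k m h1
  obtain ⟨i', hi', hmm⟩ := f_support l (idx k i) h2
  have e1 : idx k i + 1 = b k ^ ((k+2)^i) := idx_add_one k i
  have e2 : idx k i + 1 = b l ^ ((l+2)^i') := by rw [hmm]; exact idx_add_one l i'
  have hdvd : b k ∣ b l ^ ((l+2)^i') := by
    rw [← e2, e1]
    exact dvd_pow_self (b k) (by positivity)
  have : b k ∣ b l := (b_prime k).dvd_of_dvd_pow hdvd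
  have heq : b k = b l := (Nat.prime_dvd_prime_iff_eq (b_prime k) (b_prime l)).mp this
  exact hkl (b_inj heq)

lemma norm_one (k : ℕ) : (∑' m : ℕ, (starRingEnd ℂ) (f k m) * f k m) = 1 := by
  have hout : ∀ m ∉ (Finset.range (k+2)).image (idx k),
      (starRingEnd ℂ) (f k m) * f k m = 0 := by
    intro m hm
    have hz : f k m = 0 := by
      by_contra hne
      obtain ⟨i, hi, rfl⟩ := f_support k m hne
      exact hm (Finset.mem_image.mpr ⟨i, Finset.mem_range.mpr hi, rfl⟩)
    simp [hz]
  rw [tsum_eq_sum hout]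
  rw [Finset.sum_image (fun x _ y _ h => idx_inj k h)]
  have hterm : ∀ i ∈ Finset.range (k+2),
      (starRingEnd ℂ) (f k (idx k i)) * f k (idx k i) = ((amp k i ^ 2 : ℝ) : ℂ) := by
    intro i hi
    rw [f_apply_idx k i (Finset.mem_range.mp hi), Complex.conj_ofReal]
    push_cast
    ring
  rw [Finset.sum_congr rfl hterm, ← Complex.ofReal_sum]
  have hsum : ∑ i ∈ Finset.range (k+2), amp k i ^ 2 = 1 := by
    rw [Finset.sum_range_succ']
    have h0 : amp k 0 ^ 2 = 1 - T k := by
      unfold amp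
      rw [if_pos rfl]
      exact Real.sq_sqrt (by linarith [T_lt_one k])
    have hT : ∑ i ∈ Finset.range (k+1), amp k (i+1) ^ 2 = T k := by
      unfold T
      refine Finset.sum_congr rfl fun i _ => ?_
      unfold amp
      rw [if_neg (Nat.succ_ne_zero i)]
    rw [h0, hT]
    ring
  rw [hsum]
  norm_num

lemma Dkey (p r k : ℕ) (hp : 1 ≤ p) (hr : 1 ≤ r) (hk : 2*r*p ≤ k) :
    r * (gexp k p + p) + (k - 2*r*p) ≤ gexp k (p+1) := by
  obtain ⟨q, rfl⟩ : ∃ q, p = q + 1 := ⟨p - 1, by omega⟩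
  obtain ⟨m, rfl⟩ : ∃ m, k = 2*r*(q+1) + m := ⟨k - 2*r*(q+1), by omega⟩
  set k := 2*r*(q+1) + m with hkdef
  have hG : gexp k (q+1) ≤ (q+1) * (k+2)^q := gexp_le' k q
  have hX : 1 ≤ (k+2)^q := Nat.one_le_pow _ _ (by omega)
  have hstep : gexp k (q+1+1) = gexp k (q+1) + (k+2)^(q+1) := gexp_succ k (q+1)
  have hpow : (k+2)^(q+1) = (k+2)^q * (k+2) := by ring
  set X := (k+2)^q with hXdef
  set G := gexp k (q+1) with hGdef
  rw [hstep, hpow]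
  have hsub : 2*r*(q+1) + m - 2*r*(q+1) = m := by omega
  rw [hsub]
  obtain ⟨t, rfl⟩ : ∃ t, r = t + 1 := ⟨r - 1, by omega⟩
  have h1 : t * G ≤ t * ((q+1) * X) := Nat.mul_le_mul_left t hG
  have h2 : (t+1)*(q+1) + m ≤ ((t+1)*(q+1) + m) * X := Nat.le_mul_of_pos_right _ (by omega)
  calc (t+1) * (G + (q+1)) + m
      = G + (t * G + ((t+1)*(q+1) + m)) := by ring
    _ ≤ G + (t * ((q+1) * X) + ((t+1)*(q+1) + m) * X) := by
        exact Nat.add_le_add_left (Nat.add_le_add h1 h2) G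
    _ = G + X * (t*(q+1) + ((t+1)*(q+1) + m)) := by ring
    _ ≤ G + X * (2*(t+1)*(q+1) + m + 2) := by
        refine Nat.add_le_add_left (Nat.mul_le_mul_left X (by nlinarith)) G


lemma main_tendsto (p r : ℕ) (hp : 1 ≤ p) (hr : 1 ≤ r) :
    Filter.Tendsto (fun k : ℕ => supNorm (p + 1) (f k) / supNorm p (f k) ^ r)
      Filter.atTop Filter.atTop := by
  have base : Filter.Tendsto (fun k : ℕ => (2:ℝ)^(k - 2*r*p)) Filter.atTop Filter.atTop :=
    (tendsto_pow_atTop_atTop_of_one_lt (by norm_num : (1:ℝ) < 2)).comp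
      (Filter.tendsto_sub_atTop_nat (2*r*p))
  refine Filter.tendsto_atTop_mono' _ ?_ base
  filter_upwards [Filter.eventually_ge_atTop (2*r*p + p)] with k hk
  have hkp : p ≤ k := by nlinarith
  have h1 : (b k:ℝ)^(gexp k (p+1)) ≤ supNorm (p+1) (f k) :=
    supNorm_ge k (p+1) (by omega) (by omega)
  have h2 : supNorm p (f k) ≤ (b k:ℝ)^(gexp k p + p) := supNorm_le k p
  have h3 : (0:ℝ) < supNorm p (f k) :=
    lt_of_lt_of_le (pow_pos (bR_pos k) _) (supNorm_ge k p hp (by omega))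
  have h4 : (0:ℝ) < supNorm p (f k) ^ r := pow_pos h3 r
  rw [le_div_iff₀ h4]
  have hkey : r * (gexp k p + p) + (k - 2*r*p) ≤ gexp k (p+1) :=
    Dkey p r k hp hr (by omega)
  calc (2:ℝ)^(k - 2*r*p) * supNorm p (f k) ^ r
      ≤ (2:ℝ)^(k - 2*r*p) * ((b k:ℝ)^(gexp k p + p))^r := by
        exact mul_le_mul_of_nonneg_left (pow_le_pow_left₀ (le_of_lt h3) h2 r) (by positivity)
    _ ≤ (b k:ℝ)^(k - 2*r*p) * ((b k:ℝ)^(gexp k p + p))^r := by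
        refine mul_le_mul_of_nonneg_right (pow_le_pow_left₀ (by norm_num) (two_le_bR k) _) ?_
        positivity
    _ = (b k:ℝ)^(r * (gexp k p + p) + (k - 2*r*p)) := by
        rw [← pow_mul, ← pow_add, mul_comm (gexp k p + p) r, add_comm]
    _ ≤ (b k:ℝ)^(gexp k (p+1)) := pow_le_pow_right₀ (le_of_lt (one_lt_bR k)) hkey
    _ ≤ supNorm (p+1) (f k) := h1

end Stmt16Aux


/-- There is a sequence `(f_k)` of elements of `s`, orthonormal in `ℓ₂(ℕ,ℂ)`, such that
for all `p, r ∈ ℕ`, `|f_k|_{∞,p+1} / (|f_k|_{∞,p})^r → ∞` as `k → ∞`; in particular there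
is no `p` such that for every `q` there are `r` and `C > 0` with
`|f_k|_{∞,q} ≤ C (|f_k|_{∞,p})^r` for all `k`. -/
theorem stmt_16 :
    ∃ f : ℕ → ℕ → ℂ, (∀ k, inS (f k)) ∧
      (∀ i j : ℕ,
        (∑' m : ℕ, (starRingEnd ℂ) (f i m) * f j m) = if i = j then 1 else 0) ∧
      (∀ p r : ℕ, 1 ≤ p → 1 ≤ r →
        Filter.Tendsto (fun k : ℕ => supNorm (p + 1) (f k) / supNorm p (f k) ^ r)
          Filter.atTop Filter.atTop) ∧
      ¬ ∃ p : ℕ, ∀ q : ℕ, ∃ r : ℕ, ∃ C : ℝ, 0 < C ∧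
          ∀ k : ℕ, supNorm q (f k) ≤ C * supNorm p (f k) ^ r := by

  refine ⟨Stmt16Aux.f, Stmt16Aux.f_inS, ?_, Stmt16Aux.main_tendsto, ?_⟩
  · intro i j
    by_cases h : i = j
    · subst h
      rw [if_pos rfl]
      exact Stmt16Aux.norm_one i
    · rw [if_neg h]
      have hz : (fun m : ℕ => (starRingEnd ℂ) (Stmt16Aux.f i m) * Stmt16Aux.f j m)
          = fun _ => (0:ℂ) := funext (Stmt16Aux.ortho i j h)
      rw [hz, tsum_zero]
  · rintro ⟨p, hp⟩
    rcases Nat.eq_zero_or_pos p with h0 | hpos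
    · subst h0
      obtain ⟨r, C, hC, hbound⟩ := hp 2
      obtain ⟨k, hk⟩ := exists_nat_gt C
      have hs0 : supNorm 0 (Stmt16Aux.f k) ≤ 1 := by
        have := Stmt16Aux.supNorm_le k 0
        simpa [Stmt16Aux.gexp] using this
      have hs0' : (0:ℝ) ≤ supNorm 0 (Stmt16Aux.f k) := Stmt16Aux.supNorm_nonneg k 0
      have hpow1 : supNorm 0 (Stmt16Aux.f k) ^ r ≤ 1 := pow_le_one₀ hs0' hs0
      have hub : C * supNorm 0 (Stmt16Aux.f k) ^ r ≤ C := by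
        nlinarith
      have hk1 : 1 ≤ k := by
        rcases Nat.eq_zero_or_pos k with rfl | h
        · exfalso; norm_num at hk; linarith
        · exact h
      have hg2 : Stmt16Aux.gexp k 2 = k + 3 := by
        simp [Stmt16Aux.gexp, Finset.sum_range_succ]
        omega
      have hlow : (k:ℝ) + 3 ≤ supNorm 2 (Stmt16Aux.f k) := by
        have hge := Stmt16Aux.supNorm_ge k 2 (by omega) (by omega)
        have h2b : (2:ℝ)^(Stmt16Aux.gexp k 2) ≤ (Stmt16Aux.b k : ℝ) ^ (Stmt16Aux.gexp k 2) :=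
          pow_le_pow_left₀ (by norm_num) (Stmt16Aux.two_le_bR k) _
        have hnat : (k:ℝ) + 3 ≤ (2:ℝ)^(k+3) := by
          have := Nat.lt_two_pow_self (n := k+3)
          have : ((k+3 : ℕ):ℝ) ≤ ((2^(k+3) : ℕ) : ℝ) := by exact_mod_cast le_of_lt this
          push_cast at this
          linarith
        rw [hg2] at hge h2b
        calc (k:ℝ) + 3 ≤ (2:ℝ)^(k+3) := hnat
          _ ≤ (Stmt16Aux.b k : ℝ)^(k+3) := h2b
          _ ≤ supNorm 2 (Stmt16Aux.f k) := hge
      have := hbound k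
      linarith
    · obtain ⟨r, C, hC, hbound⟩ := hp (p+1)
      set r' := max r 1 with hr'
      have ht := Stmt16Aux.main_tendsto p r' hpos (le_max_right r 1)
      obtain ⟨k, hk1, hk2⟩ :=
        ((ht.eventually_ge_atTop (C+1)).and (Filter.eventually_ge_atTop p)).exists
      have hD1 : (1:ℝ) ≤ supNorm p (Stmt16Aux.f k) := by
        refine le_trans ?_ (Stmt16Aux.supNorm_ge k p hpos (by omega))
        exact one_le_pow₀ (le_of_lt (Stmt16Aux.one_lt_bR k))
      have hmono : supNorm p (Stmt16Aux.f k) ^ r ≤ supNorm p (Stmt16Aux.f k) ^ r' :=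
        pow_le_pow_right₀ hD1 (le_max_left r 1)
      have hpos' : (0:ℝ) < supNorm p (Stmt16Aux.f k) ^ r' := by positivity
      have : supNorm (p+1) (Stmt16Aux.f k) / supNorm p (Stmt16Aux.f k) ^ r' ≤ C := by
        rw [div_le_iff₀ hpos']
        calc supNorm (p+1) (Stmt16Aux.f k) ≤ C * supNorm p (Stmt16Aux.f k) ^ r := hbound k
          _ ≤ C * supNorm p (Stmt16Aux.f k) ^ r' := by
              exact mul_le_mul_of_nonneg_left hmono (le_of_lt hC)
      linarith


end
end

section
/- Define Hadamard matrices by H_1 := [1] and H_{2^{n+1}} := [[H_{2^n}, H_{2^n}],[H_{2^n}, -H_{2^n}]], and set Ĥ_{2^n} := 2^{-n/2} H_{2^n}, so that Ĥ_{2^n} is a unitary 2^n × 2^n matrix. Let (d_n)_{n∈ℕ} be any sequence of nonnegative integers, let U be the infinite block-diagonal matrix with blocks Ĥ_{2^{d_1}}, Ĥ_{2^{d_2}}, Ĥ_{2^{d_3}}, …, and let f_k denote the k-th row of U (a sequence indexed by ℕ). Then (f_k)_{k∈ℕ} is an orthonormal basis of ℓ₂(ℕ,ℂ), each f_k belongs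 to s, and for every q ∈ ℕ (q ≥ 1) and every k ∈ ℕ one has |f_k|_{∞,q} ≤ (|f_k|_{∞,1})^{2q}, where |ξ|_{∞,q} := sup_{j∈ℕ} |ξ_j| j^q. In particular the condition '∃p ∀q ∃r ∃C>0 ∀k: |f_k|_{∞,q} ≤ C·(|f_k|_{∞,p})^r' holds with p = 1, C = 1, r = 2q. -/
noncomputable section

/-- The Hadamard matrix `H_{2^n}`, defined recursively by `H_1 = [1]` and
`H_{2^{n+1}} = [[H_{2^n}, H_{2^n}], [H_{2^n}, -H_{2^n}]]`; `Had n i j` is its `(i,j)`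
entry (0-indexed, meaningful for `i, j < 2^n`). -/
def Had : ℕ → ℕ → ℕ → ℝ
  | 0, _, _ => 1
  | n + 1, i, j =>
      if i < 2 ^ n then
        (if j < 2 ^ n then Had n i j else Had n i (j - 2 ^ n))
      else
        (if j < 2 ^ n then Had n (i - 2 ^ n) j else -Had n (i - 2 ^ n) (j - 2 ^ n))

/-- The normalized Hadamard matrix `Ĥ_{2^n} = 2^{-n/2} H_{2^n}`. -/
def HadHat (n i j : ℕ) : ℝ := Had n i j / Real.sqrt (2 ^ n)

/-- The starting (0-indexed) position `2^{d_1} + ⋯ + 2^{d_n}` of the `n`-th diagonal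
block of `U` (blocks numbered from `0`). -/
def blockStart (d : ℕ → ℕ) (n : ℕ) : ℕ := ∑ m ∈ Finset.range n, 2 ^ d m

lemma had_pm : ∀ n, ∀ i < 2 ^ n, ∀ j < 2 ^ n, Had n i j = 1 ∨ Had n i j = -1 := by
  intro n
  induction n with
  | zero => intro i _ j _; left; rfl
  | succ n ih =>
    intro i hi j hj
    rw [pow_succ] at hi hj
    by_cases h1 : i < 2 ^ n <;> by_cases h2 : j < 2 ^ n <;>
      simp only [Had, h1, h2, if_true, if_false]
    · exact ih i h1 j h2
    · exact ih i h1 _ (by omega)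
    · exact ih _ (by omega) j h2
    · rcases ih (i - 2 ^ n) (by omega) (j - 2 ^ n) (by omega) with h | h <;> simp [h]

lemma had_symm : ∀ n, ∀ i < 2 ^ n, ∀ j < 2 ^ n, Had n i j = Had n j i := by
  intro n
  induction n with
  | zero => intro _ _ _ _; rfl
  | succ n ih =>
    intro i hi j hj
    rw [pow_succ] at hi hj
    by_cases h1 : i < 2 ^ n <;> by_cases h2 : j < 2 ^ n <;>
      simp only [Had, h1, h2, if_true, if_false]
    · exact ih i h1 j h2
    · exact ih i h1 _ (by omega)
    · exact ih _ (by omega) j h2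
    · rw [ih _ (by omega) _ (by omega)]

lemma had_row : ∀ n, ∀ i < 2 ^ n, ∀ i' < 2 ^ n,
    (∑ j ∈ Finset.range (2 ^ n), Had n i j * Had n i' j) =
      if i = i' then (2 ^ n : ℝ) else 0 := by
  intro n
  induction n with
  | zero => intro i hi i' hi'; interval_cases i <;> interval_cases i' <;> simp [Had]
  | succ n ih =>
    intro i hi i' hi'
    have h2 : (2:ℕ) ^ (n+1) = 2 ^ n + 2 ^ n := by rw [pow_succ]; omega
    rw [h2, Finset.sum_range_add]
    rw [pow_succ] at hi hi'
    by_cases h1 : i < 2 ^ n <;> by_cases h2 : i' < 2 ^ n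
    · have e1 : ∀ j ∈ Finset.range (2 ^ n), Had (n+1) i j * Had (n+1) i' j
          = Had n i j * Had n i' j := by
        intro j hj; rw [Finset.mem_range] at hj
        simp only [Had, h1, h2, hj, if_true]
      have e2 : ∀ j ∈ Finset.range (2 ^ n), Had (n+1) i (2^n + j) * Had (n+1) i' (2^n + j)
          = Had n i j * Had n i' j := by
        intro j hj; rw [Finset.mem_range] at hj
        have hn : ¬ (2 ^ n + j < 2 ^ n) := by omega
        simp only [Had, h1, h2, hn, if_true, if_false, Nat.add_sub_cancel_left]
      rw [Finset.sum_congr rfl e1, Finset.sum_congr rfl e2, ih i h1 i' h2]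
      by_cases h : i = i'
      · simp [h, pow_succ]; ring
      · simp [h]
    · have e1 : ∀ j ∈ Finset.range (2 ^ n), Had (n+1) i j * Had (n+1) i' j
          = Had n i j * Had n (i' - 2 ^ n) j := by
        intro j hj; rw [Finset.mem_range] at hj
        simp only [Had, h1, h2, hj, if_true, if_false]
      have e2 : ∀ j ∈ Finset.range (2 ^ n), Had (n+1) i (2^n + j) * Had (n+1) i' (2^n + j)
          = -(Had n i j * Had n (i' - 2 ^ n) j) := by
        intro j hj; rw [Finset.mem_range] at hj
        have hn : ¬ (2 ^ n + j < 2 ^ n) := by omega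
        simp only [Had, h1, h2, hn, if_true, if_false, Nat.add_sub_cancel_left]
        ring
      rw [Finset.sum_congr rfl e1, Finset.sum_congr rfl e2, Finset.sum_neg_distrib]
      have hne : i ≠ i' := by omega
      simp [hne]
    · have e1 : ∀ j ∈ Finset.range (2 ^ n), Had (n+1) i j * Had (n+1) i' j
          = Had n (i - 2 ^ n) j * Had n i' j := by
        intro j hj; rw [Finset.mem_range] at hj
        simp only [Had, h1, h2, hj, if_true, if_false]
      have e2 : ∀ j ∈ Finset.range (2 ^ n), Had (n+1) i (2^n + j) * Had (n+1) i' (2^n + j)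
          = -(Had n (i - 2 ^ n) j * Had n i' j) := by
        intro j hj; rw [Finset.mem_range] at hj
        have hn : ¬ (2 ^ n + j < 2 ^ n) := by omega
        simp only [Had, h1, h2, hn, if_true, if_false, Nat.add_sub_cancel_left]
        ring
      rw [Finset.sum_congr rfl e1, Finset.sum_congr rfl e2, Finset.sum_neg_distrib]
      have hne : i ≠ i' := by omega
      simp [hne]
    · have e1 : ∀ j ∈ Finset.range (2 ^ n), Had (n+1) i j * Had (n+1) i' j
          = Had n (i - 2 ^ n) j * Had n (i' - 2 ^ n) j := by
        intro j hj; rw [Finset.mem_range] at hj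
        simp only [Had, h1, h2, hj, if_true, if_false]
      have e2 : ∀ j ∈ Finset.range (2 ^ n), Had (n+1) i (2^n + j) * Had (n+1) i' (2^n + j)
          = Had n (i - 2 ^ n) j * Had n (i' - 2 ^ n) j := by
        intro j hj; rw [Finset.mem_range] at hj
        have hn : ¬ (2 ^ n + j < 2 ^ n) := by omega
        simp only [Had, h1, h2, hn, if_true, if_false, Nat.add_sub_cancel_left]
        ring
      rw [Finset.sum_congr rfl e1, Finset.sum_congr rfl e2, ih _ (by omega) _ (by omega)]
      have hiff : i = i' ↔ i - 2 ^ n = i' - 2 ^ n := by omega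
      by_cases h : i = i'
      · simp [h, hiff.mp h, pow_succ]; ring
      · have hne : i - 2 ^ n ≠ i' - 2 ^ n := fun hh => h (hiff.mpr hh)
        simp [h, hne]

lemma sqrt_pos' (n : ℕ) : 0 < Real.sqrt (2 ^ n) := Real.sqrt_pos.mpr (by positivity)

lemma hadHat_row (n : ℕ) : ∀ i < 2 ^ n, ∀ i' < 2 ^ n,
    (∑ j ∈ Finset.range (2 ^ n), HadHat n i j * HadHat n i' j) =
      if i = i' then 1 else 0 := by
  intro i hi i' hi'
  have hs : Real.sqrt (2 ^ n) * Real.sqrt (2 ^ n) = 2 ^ n :=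
    Real.mul_self_sqrt (by positivity)
  have he : ∀ j, HadHat n i j * HadHat n i' j = Had n i j * Had n i' j / (2 ^ n) := by
    intro j; rw [HadHat, HadHat, div_mul_div_comm, hs]
  simp only [he]
  rw [← Finset.sum_div, had_row n i hi i' hi']
  by_cases h : i = i'
  · simp only [h, if_true]; exact div_self (by positivity)
  · simp [h]

lemma hadHat_col (n : ℕ) : ∀ j < 2 ^ n, ∀ j' < 2 ^ n,
    (∑ i ∈ Finset.range (2 ^ n), HadHat n i j * HadHat n i j') =
      if j = j' then 1 else 0 := by
  intro j hj j' hj'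
  rw [← hadHat_row n j hj j' hj']
  apply Finset.sum_congr rfl
  intro i hi; rw [Finset.mem_range] at hi
  rw [HadHat, HadHat, HadHat, HadHat, had_symm n i hi j hj, had_symm n i hi j' hj']

lemma hadHat_abs (n : ℕ) : ∀ i < 2 ^ n, ∀ j < 2 ^ n,
    |HadHat n i j| = 1 / Real.sqrt (2 ^ n) := by
  intro i hi j hj
  rw [HadHat, abs_div, abs_of_pos (sqrt_pos' n)]
  rcases had_pm n i hi j hj with h | h <;> rw [h] <;> norm_num

lemma blockStart_succ (d : ℕ → ℕ) (n : ℕ) :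
    blockStart d (n+1) = blockStart d n + 2 ^ d n := Finset.sum_range_succ _ _

lemma blockStart_mono (d : ℕ → ℕ) : Monotone (blockStart d) :=
  monotone_nat_of_le_succ fun n => by rw [blockStart_succ]; exact Nat.le_add_right _ _

lemma le_blockStart (d : ℕ → ℕ) (n : ℕ) : n ≤ blockStart d n := by
  induction n with
  | zero => simp [blockStart]
  | succ n ih => rw [blockStart_succ]; have := Nat.one_le_two_pow (n := d n); omega

lemma exists_block (d : ℕ → ℕ) (k : ℕ) :
    ∃ n i, i < 2 ^ d n ∧ k = blockStart d n + i := by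
  classical
  have hex : ∃ n, k < blockStart d (n+1) :=
    ⟨k, lt_of_lt_of_le (Nat.lt_succ_self k) (le_blockStart d (k+1))⟩
  have hn : k < blockStart d (Nat.find hex + 1) := Nat.find_spec hex
  have hlow : blockStart d (Nat.find hex) ≤ k := by
    rcases Nat.eq_zero_or_pos (Nat.find hex) with h0 | h0
    · rw [h0]; simp [blockStart]
    · obtain ⟨m, hm⟩ := Nat.exists_eq_succ_of_ne_zero (Nat.pos_iff_ne_zero.mp h0)
      have := Nat.find_min hex (m := m) (by omega)
      rw [hm, Nat.succ_eq_add_one]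
      omega
  rw [blockStart_succ] at hn
  exact ⟨Nat.find hex, k - blockStart d (Nat.find hex), by omega, by omega⟩

lemma aux_ineq (B t : ℝ) (ht : 1 ≤ t) (hB : t ^ 2 ≤ B) (q : ℕ) :
    B ^ q / t ≤ (B / t) ^ (2 * q) := by
  have ht0 : 0 < t := lt_of_lt_of_le one_pos ht
  have hB0 : 0 ≤ B := le_trans (sq_nonneg t) hB
  rw [div_pow, div_le_div_iff₀ ht0 (by positivity)]
  calc B ^ q * t ^ (2*q) = B ^ q * (t ^ 2) ^ q := by rw [← pow_mul]
    _ ≤ B ^ q * B ^ q :=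
        mul_le_mul_of_nonneg_left (pow_le_pow_left₀ (sq_nonneg t) hB q) (by positivity)
    _ = B ^ (2*q) := by rw [← pow_add, two_mul]
    _ ≤ B ^ (2*q) * t := le_mul_of_one_le_right (by positivity) ht

/-- Let `(d_n)` be nonnegative integers and let `f_k` be the `k`-th row of the infinite
block-diagonal matrix `U` with blocks `Ĥ_{2^{d_n}}` (the hypotheses `hblock`, `hzero`
say exactly that `f` is the family of rows of `U`). Then the rows of each `Ĥ_{2^n}` are
orthonormal (`Ĥ_{2^n}` is unitary), each `f_k ∈ s`, `(f_k)` is an orthonormal basis of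
`ℓ₂(ℕ,ℂ)`, and `|f_k|_{∞,q} ≤ (|f_k|_{∞,1})^{2q}` for all `q ≥ 1` and `k`; in particular
`∃ p, ∀ q, ∃ r, ∃ C > 0, ∀ k, |f_k|_{∞,q} ≤ C (|f_k|_{∞,p})^r` holds with
`p = 1`, `C = 1`, `r = 2q`. -/
theorem stmt_18 (d : ℕ → ℕ) (f : ℕ → ℕ → ℂ)
    (hblock : ∀ n : ℕ, ∀ i < 2 ^ d n, ∀ j < 2 ^ d n,
      f (blockStart d n + i) (blockStart d n + j) = (HadHat (d n) i j : ℂ))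
    (hzero : ∀ n : ℕ, ∀ i < 2 ^ d n, ∀ j : ℕ,
      (j < blockStart d n ∨ blockStart d n + 2 ^ d n ≤ j) → f (blockStart d n + i) j = 0) :
    (∀ n : ℕ, ∀ i < 2 ^ n, ∀ i' < 2 ^ n,
      (∑ j ∈ Finset.range (2 ^ n), HadHat n i j * HadHat n i' j) =
        if i = i' then 1 else 0) ∧
    (∀ k, inS (f k)) ∧
    (∀ k l : ℕ,
      (∑' j : ℕ, (starRingEnd ℂ) (f k j) * f l j) = if k = l then 1 else 0) ∧
    (∀ ξ : ℕ → ℂ, Summable (fun j : ℕ => ‖ξ j‖ ^ 2) →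
      (∀ k : ℕ, (∑' j : ℕ, (starRingEnd ℂ) (f k j) * ξ j) = 0) → ξ = 0) ∧
    (∀ q : ℕ, 1 ≤ q → ∀ k : ℕ, supNorm q (f k) ≤ supNorm 1 (f k) ^ (2 * q)) ∧
    (∃ p : ℕ, ∀ q : ℕ, ∃ r : ℕ, ∃ C : ℝ, 0 < C ∧
      ∀ k : ℕ, supNorm q (f k) ≤ C * supNorm p (f k) ^ r) := by

  classical
  have hsupp : ∀ n : ℕ, ∀ i < 2 ^ d n,
      ∀ j ∉ Finset.Ico (blockStart d n) (blockStart d n + 2 ^ d n),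
      f (blockStart d n + i) j = 0 := by
    intro n i hi j hj
    rw [Finset.mem_Ico] at hj
    exact hzero n i hi j (by omega)
  -- conjunct 2
  have hinS : ∀ k, inS (f k) := by
    intro k q
    obtain ⟨n, i, hi, rfl⟩ := exists_block d k
    apply summable_of_ne_finset_zero (s := Finset.range (blockStart d n + 2 ^ d n))
    intro j hj
    rw [Finset.mem_range] at hj
    have h0 := hzero n i hi j (Or.inr (by omega))
    simp [h0]
  -- ordering of blocks
  have horder : ∀ m m' a a' : ℕ, m < m' → a < 2 ^ d m →
      blockStart d m + a < blockStart d m' + a' := by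
    intro m m' a a' hmm ha
    have h1 : blockStart d (m+1) ≤ blockStart d m' := blockStart_mono d hmm
    rw [blockStart_succ] at h1; omega
  have hdisj : ∀ m m' a a' j : ℕ, m < m' → a < 2 ^ d m → a' < 2 ^ d m' →
      f (blockStart d m + a) j = 0 ∨ f (blockStart d m' + a') j = 0 := by
    intro m m' a a' j hmm ha ha'
    rcases Nat.lt_or_ge j (blockStart d m') with h | h
    · exact Or.inr (hzero m' a' ha' j (Or.inl h))
    · left
      apply hzero m a ha j
      right
      have h1 : blockStart d (m+1) ≤ blockStart d m' := blockStart_mono d hmm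
      rw [blockStart_succ] at h1; omega
  -- conjunct 3
  have hC3 : ∀ k l : ℕ,
      (∑' j : ℕ, (starRingEnd ℂ) (f k j) * f l j) = if k = l then 1 else 0 := by
    intro k l
    obtain ⟨n, i, hi, rfl⟩ := exists_block d k
    obtain ⟨n', i', hi', rfl⟩ := exists_block d l
    rcases lt_trichotomy n n' with hnn | rfl | hnn
    · have hne : blockStart d n + i ≠ blockStart d n' + i' :=
        Nat.ne_of_lt (horder _ _ _ _ hnn hi)
      rw [if_neg hne]
      have hz : ∀ j : ℕ,
          (starRingEnd ℂ) (f (blockStart d n + i) j) * f (blockStart d n' + i') j = 0 := by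
        intro j
        rcases hdisj n n' i i' j hnn hi hi' with h | h <;> rw [h] <;> simp
      simp only [hz]; exact tsum_zero
    · -- same block
      have hz : ∀ j ∉ Finset.Ico (blockStart d n) (blockStart d n + 2 ^ d n),
          (starRingEnd ℂ) (f (blockStart d n + i) j) * f (blockStart d n + i') j = 0 := by
        intro j hj
        rw [hsupp n i hi j hj]; simp
      rw [tsum_eq_sum hz, Finset.sum_Ico_eq_sum_range]
      have hsub : blockStart d n + 2 ^ d n - blockStart d n = 2 ^ d n := by omega
      rw [hsub]
      have he : ∀ j ∈ Finset.range (2 ^ d n),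
          (starRingEnd ℂ) (f (blockStart d n + i) (blockStart d n + j)) *
            f (blockStart d n + i') (blockStart d n + j)
          = ((HadHat (d n) i j * HadHat (d n) i' j : ℝ) : ℂ) := by
        intro j hj; rw [Finset.mem_range] at hj
        rw [hblock n i hi j hj, hblock n i' hi' j hj, Complex.conj_ofReal]
        push_cast; ring
      rw [Finset.sum_congr rfl he, ← Complex.ofReal_sum, hadHat_row (d n) i hi i' hi']
      by_cases h : i = i'
      · simp [h]
      · have hne : blockStart d n + i ≠ blockStart d n + i' := by omega
        simp [h, hne]
    · have hne : blockStart d n + i ≠ blockStart d n' + i' :=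
        (Nat.ne_of_lt (horder _ _ _ _ hnn hi')).symm
      rw [if_neg hne]
      have hz : ∀ j : ℕ,
          (starRingEnd ℂ) (f (blockStart d n + i) j) * f (blockStart d n' + i') j = 0 := by
        intro j
        rcases hdisj n' n i' i j hnn hi' hi with h | h <;> rw [h] <;> simp
      simp only [hz]; exact tsum_zero
  -- conjunct 4
  have hC4 : ∀ ξ : ℕ → ℂ, Summable (fun j : ℕ => ‖ξ j‖ ^ 2) →
      (∀ k : ℕ, (∑' j : ℕ, (starRingEnd ℂ) (f k j) * ξ j) = 0) → ξ = 0 := by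
    intro ξ _ horth
    funext j
    obtain ⟨n, i, hi, rfl⟩ := exists_block d j
    show ξ (blockStart d n + i) = 0
    set N := 2 ^ d n with hN
    set bs := blockStart d n with hbs
    have hrow : ∀ i' : ℕ, i' < N →
        (∑ j' ∈ Finset.range N, (HadHat (d n) i' j' : ℂ) * ξ (bs + j')) = 0 := by
      intro i' hi'
      have h0 := horth (bs + i')
      have hz : ∀ j ∉ Finset.Ico bs (bs + N),
          (starRingEnd ℂ) (f (bs + i') j) * ξ j = 0 := by
        intro j hj; rw [hsupp n i' hi' j hj]; simp
      rw [tsum_eq_sum hz, Finset.sum_Ico_eq_sum_range] at h0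
      have hsub : bs + N - bs = N := by omega
      rw [hsub] at h0
      rw [← h0]
      apply Finset.sum_congr rfl
      intro j hj; rw [Finset.mem_range] at hj
      rw [hblock n i' hi' j hj, Complex.conj_ofReal]
    have key : (∑ i' ∈ Finset.range N, (HadHat (d n) i' i : ℂ) *
        ∑ j' ∈ Finset.range N, (HadHat (d n) i' j' : ℂ) * ξ (bs + j')) = ξ (bs + i) := by
      calc (∑ i' ∈ Finset.range N, (HadHat (d n) i' i : ℂ) *
              ∑ j' ∈ Finset.range N, (HadHat (d n) i' j' : ℂ) * ξ (bs + j'))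
          = ∑ i' ∈ Finset.range N, ∑ j' ∈ Finset.range N,
              ((HadHat (d n) i' i * HadHat (d n) i' j' : ℝ) : ℂ) * ξ (bs + j') := by
            apply Finset.sum_congr rfl; intro i' _
            rw [Finset.mul_sum]; apply Finset.sum_congr rfl; intro j' _
            push_cast; ring
        _ = ∑ j' ∈ Finset.range N,
              ((∑ i' ∈ Finset.range N, HadHat (d n) i' i * HadHat (d n) i' j' : ℝ) : ℂ) *
                ξ (bs + j') := by
            rw [Finset.sum_comm]
            apply Finset.sum_congr rfl; intro j' _
            rw [Complex.ofReal_sum, Finset.sum_mul]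
        _ = ξ (bs + i) := by
            have he : ∀ j' ∈ Finset.range N,
                ((∑ i' ∈ Finset.range N, HadHat (d n) i' i * HadHat (d n) i' j' : ℝ) : ℂ) *
                  ξ (bs + j')
                = (if i = j' then 1 else 0) * ξ (bs + j') := by
              intro j' hj'; rw [Finset.mem_range] at hj'
              rw [hadHat_col (d n) i hi j' hj']
              by_cases h : i = j' <;> simp [h]
            rw [Finset.sum_congr rfl he]
            simp [Finset.sum_ite_eq, Finset.mem_range.mpr hi]
    rw [← key]
    have hzz : ∀ i' ∈ Finset.range N, (HadHat (d n) i' i : ℂ) *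
        ∑ j' ∈ Finset.range N, (HadHat (d n) i' j' : ℂ) * ξ (bs + j') = 0 := by
      intro i' hi'; rw [Finset.mem_range] at hi'; rw [hrow i' hi', mul_zero]
    rw [Finset.sum_congr rfl hzz, Finset.sum_const_zero]
  -- norm bounds
  have hnormb : ∀ k : ℕ, ∃ B t : ℝ, 1 ≤ t ∧ t ^ 2 ≤ B ∧ 0 < t ∧
      (∀ q : ℕ, supNorm q (f k) ≤ B ^ q / t) ∧ B / t ≤ supNorm 1 (f k) := by
    intro k
    obtain ⟨n, i, hi, rfl⟩ := exists_block d k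
    set bs := blockStart d n with hbs
    set t := Real.sqrt (2 ^ d n) with htdef
    set B : ℝ := ((bs + 2 ^ d n : ℕ) : ℝ) with hBdef
    have ht0 : 0 < t := sqrt_pos' _
    have hts : t ^ 2 = 2 ^ d n := Real.sq_sqrt (by positivity)
    have h2p : (1:ℝ) ≤ 2 ^ d n := one_le_pow₀ one_le_two
    have ht1 : 1 ≤ t := by nlinarith
    have htB : t ^ 2 ≤ B := by
      rw [hts, hBdef]; push_cast
      have : (0:ℝ) ≤ (bs : ℝ) := Nat.cast_nonneg bs
      linarith
    have hnin : ∀ j : ℕ, bs ≤ j → j < bs + 2 ^ d n → ‖f (bs + i) j‖ = 1 / t := by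
      intro j h1 h2
      have hj : j - bs < 2 ^ d n := by omega
      have hv : f (bs + i) j = (HadHat (d n) i (j - bs) : ℂ) := by
        have hb := hblock n i hi (j - bs) hj
        rwa [Nat.add_sub_cancel' h1] at hb
      rw [hv, Complex.norm_real, Real.norm_eq_abs, hadHat_abs (d n) i hi (j - bs) hj]
    have hub : ∀ q : ℕ, ∀ j : ℕ, ‖f (bs + i) j‖ * ((j:ℝ)+1) ^ q ≤ B ^ q / t := by
      intro q j
      by_cases hin : bs ≤ j ∧ j < bs + 2 ^ d n
      · rw [hnin j hin.1 hin.2, one_div, inv_mul_eq_div, div_le_div_iff₀ ht0 ht0]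
        have hjB : (j:ℝ) + 1 ≤ B := by
          rw [hBdef]
          have : (j + 1 : ℕ) ≤ bs + 2 ^ d n := by omega
          exact_mod_cast this
        have := pow_le_pow_left₀ (by positivity) hjB q
        nlinarith
      · push_neg at hin
        have h0 : f (bs + i) j = 0 := hzero n i hi j (by omega)
        rw [h0]
        simp only [norm_zero, zero_mul]
        positivity
    have hlb : B / t ≤ supNorm 1 (f (bs + i)) := by
      have hbdd : BddAbove (Set.range fun j : ℕ => ‖f (bs + i) j‖ * ((j:ℝ)+1) ^ 1) := by
        refine ⟨B ^ 1 / t, ?_⟩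
        rintro x ⟨j, rfl⟩; exact hub 1 j
      have hp := Nat.one_le_two_pow (n := d n)
      have hj1 : bs ≤ bs + (2 ^ d n - 1) := Nat.le_add_right _ _
      have hj2 : bs + (2 ^ d n - 1) < bs + 2 ^ d n := by omega
      have hval := hnin _ hj1 hj2
      have hle := le_ciSup hbdd (bs + (2 ^ d n - 1))
      rw [hval] at hle
      refine le_trans (le_of_eq ?_) hle
      have h1 : bs + (2 ^ d n - 1) + 1 = bs + 2 ^ d n := by omega
      have hcast : ((bs + (2 ^ d n - 1) : ℕ) : ℝ) + 1 = B := by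
        rw [hBdef]; exact_mod_cast h1
      rw [pow_one, hcast, one_div, inv_mul_eq_div]
    exact ⟨B, t, ht1, htB, ht0, fun q => ciSup_le (hub q), hlb⟩
  -- conjunct 5
  have hC5 : ∀ q : ℕ, 1 ≤ q → ∀ k : ℕ, supNorm q (f k) ≤ supNorm 1 (f k) ^ (2 * q) := by
    intro q _ k
    obtain ⟨B, t, ht1, htB, ht0, hub, hlb⟩ := hnormb k
    have hB0 : 0 ≤ B := le_trans (sq_nonneg t) htB
    calc supNorm q (f k) ≤ B ^ q / t := hub q
      _ ≤ (B / t) ^ (2*q) := aux_ineq B t ht1 htB q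
      _ ≤ supNorm 1 (f k) ^ (2*q) :=
          pow_le_pow_left₀ (div_nonneg hB0 ht0.le) hlb _
  refine ⟨hadHat_row, hinS, hC3, hC4, hC5, 1, fun q => ?_⟩
  rcases Nat.eq_zero_or_pos q with rfl | hq
  · refine ⟨0, 1, one_pos, fun k => ?_⟩
    obtain ⟨B, t, ht1, htB, ht0, hub, hlb⟩ := hnormb k
    have : supNorm 0 (f k) ≤ 1 := by
      calc supNorm 0 (f k) ≤ B ^ 0 / t := hub 0
        _ = 1 / t := by norm_num
        _ ≤ 1 := by rw [div_le_one ht0]; exact ht1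
    simpa using this
  · exact ⟨2*q, 1, one_pos, fun k => by simpa using hC5 q hq k⟩

end
end
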